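/- arXiv:2406.02475 — 8 statements merged into one kernel-verified Lean document; each statement's English description precedes it below -/
import Mathlib

section
/- Let A and G be filtered groups and λ : G → Aut(A) a group homomorphism such that for all i, j and g ∈ G_i, a ∈ A_j one has λ_g(a)·a⁻¹ ∈ A_{i+j}. Then the semidirect product A ⋊_λ G is a filtered group with filtration (A ⋊_λ G)_i = A_i ⋊ G_i, i.e., [A_i ⋊ G_i, A_j ⋊ G_j] ⊆ A_{i+j} ⋊ G_{i+j}. -/
private lemma desc_le {A : Type*} [Group A] (Af : ℕ → Subgroup A)
    (hAdesc : ∀ i, Af (i + 1) ≤ Af i) : ∀ m k, Af (m + k) ≤ Af m := by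
  intro m k
  induction k with
  | zero => exact le_rfl
  | succ n ih => exact le_trans (hAdesc (m + n)) ih

/-- Let `A`, `G` be filtered groups and `λ : G → Aut(A)` a homomorphism with
`λ_g(a) · a⁻¹ ∈ A_{i+j}` for `g ∈ Gᵢ`, `a ∈ Aⱼ`. Then the semidirect product
`A ⋊ G` is filtered by `Aᵢ ⋊ Gᵢ`:
`[Aᵢ ⋊ Gᵢ, Aⱼ ⋊ Gⱼ] ⊆ A_{i+j} ⋊ G_{i+j}`. -/
theorem stmt9 {A G : Type*} [Group A] [Group G] (φ : G →* MulAut A)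
    (Af : ℕ → Subgroup A) (Gf : ℕ → Subgroup G)
    (hAnorm : ∀ i, (Af i).Normal) (hGnorm : ∀ i, (Gf i).Normal)
    (hA0 : Af 0 = ⊤) (hG0 : Gf 0 = ⊤)
    (hAdesc : ∀ i, Af (i + 1) ≤ Af i) (hGdesc : ∀ i, Gf (i + 1) ≤ Gf i)
    (hAcomm : ∀ i j, ∀ x ∈ Af i, ∀ y ∈ Af j, x * y * x⁻¹ * y⁻¹ ∈ Af (i + j))
    (hGcomm : ∀ i j, ∀ x ∈ Gf i, ∀ y ∈ Gf j, x * y * x⁻¹ * y⁻¹ ∈ Gf (i + j))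
    (hlam : ∀ i j, ∀ g ∈ Gf i, ∀ a ∈ Af j, φ g a * a⁻¹ ∈ Af (i + j)) :
    ∀ i j, ∀ x y : A ⋊[φ] G,
      x.left ∈ Af i → x.right ∈ Gf i → y.left ∈ Af j → y.right ∈ Gf j →
      (x * y * x⁻¹ * y⁻¹).left ∈ Af (i + j) ∧
      (x * y * x⁻¹ * y⁻¹).right ∈ Gf (i + j) := by
  intro i j x y hxl hxr hyl hyr
  obtain ⟨a, g⟩ := x
  obtain ⟨b, h⟩ := y
  have hleft : (⟨a, g⟩ * ⟨b, h⟩ * (⟨a, g⟩ : A ⋊[φ] G)⁻¹ * (⟨b, h⟩ : A ⋊[φ] G)⁻¹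
      : A ⋊[φ] G).left
      = a * φ g b * φ (g * h * g⁻¹) a⁻¹ * φ (g * h * g⁻¹ * h⁻¹) b⁻¹ := by
    simp [SemidirectProduct.mul_left, SemidirectProduct.inv_left,
      SemidirectProduct.mul_right, SemidirectProduct.inv_right,
      map_mul, map_inv, mul_assoc]
  have hright : (⟨a, g⟩ * ⟨b, h⟩ * (⟨a, g⟩ : A ⋊[φ] G)⁻¹ * (⟨b, h⟩ : A ⋊[φ] G)⁻¹
      : A ⋊[φ] G).right = g * h * g⁻¹ * h⁻¹ := rfl
  refine ⟨?_, ?_⟩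
  · rw [hleft]
    haveI : (Af (i + j)).Normal := hAnorm (i + j)
    have hk : g * h * g⁻¹ * h⁻¹ ∈ Gf (i + j) := hGcomm i j g hxr h hyr
    have hc : g * h * g⁻¹ ∈ Gf j := (hGnorm j).conj_mem h hyr g
    -- quotient map
    rw [← QuotientGroup.eq_one_iff]
    have e1 : (↑(φ g b) : A ⧸ Af (i + j)) = ↑b := by
      have hu := hlam i j g hxr b hyl
      have hw : φ g b = (φ g b * b⁻¹) * b := by group
      rw [hw, QuotientGroup.mk_mul, (QuotientGroup.eq_one_iff _).mpr hu, one_mul]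
    have e2 : (↑(φ (g * h * g⁻¹) a⁻¹) : A ⧸ Af (i + j)) = ↑(a⁻¹) := by
      have hu := hlam j i (g * h * g⁻¹) hc a⁻¹ ((Af i).inv_mem hxl)
      rw [Nat.add_comm j i, inv_inv] at hu
      have hw : φ (g * h * g⁻¹) a⁻¹ = (φ (g * h * g⁻¹) a⁻¹ * a) * a⁻¹ := by group
      rw [hw, QuotientGroup.mk_mul, (QuotientGroup.eq_one_iff _).mpr hu, one_mul]
    have e3 : (↑(φ (g * h * g⁻¹ * h⁻¹) b⁻¹) : A ⧸ Af (i + j)) = ↑(b⁻¹) := by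
      have hu := hlam (i + j) j (g * h * g⁻¹ * h⁻¹) hk b⁻¹ ((Af j).inv_mem hyl)
      rw [inv_inv] at hu
      have hu' := desc_le Af hAdesc (i + j) j hu
      have hw : φ (g * h * g⁻¹ * h⁻¹) b⁻¹ = (φ (g * h * g⁻¹ * h⁻¹) b⁻¹ * b) * b⁻¹ := by
        group
      rw [hw, QuotientGroup.mk_mul, (QuotientGroup.eq_one_iff _).mpr hu', one_mul]
    have key : (↑(a * b * a⁻¹ * b⁻¹) : A ⧸ Af (i + j)) = 1 :=
      (QuotientGroup.eq_one_iff _).mpr (hAcomm i j a hxl b hyl)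
    simp only [QuotientGroup.mk_mul] at key ⊢
    rw [e1, e2, e3]
    exact key
  · rw [hright]
    exact hGcomm i j g hxr h hyr
end

section
/- Let 𝔞 be a Lie ring. There is a bijective correspondence between biadditive operations ▷ making (𝔞, ▷) a post-Lie ring and t-bijective sub Lie rings 𝔤 of aff(𝔞) = 𝔞 ⊕ Der(𝔞): to ▷ one associates 𝔤 = {(a, L_a) | a ∈ 𝔞} where L_a(b) = a▷b, and conversely from a t-bijective 𝔤 one defines a▷b = δ(b) for the unique (a, δ) ∈ 𝔤. -/
/-- A post-Lie ring structure on a Lie ring `A`: a biadditive operation `▷`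
satisfying the two post-Lie axioms. -/
structure PostLieOp (A : Type*) [LieRing A] where
  t : A →+ A →+ A
  ax1 : ∀ x y z : A, t x ⁅y, z⁆ = ⁅t x y, z⁆ + ⁅y, t x z⁆
  ax2 : ∀ x y z : A, t ⁅x, y⁆ z =
    (t x (t y z) - t (t x y) z) - (t y (t x z) - t (t y x) z)

/-- The bracket of `aff(𝔞) = 𝔞 ⊕ Der(𝔞)`:
`[(a,δ),(b,ε)] = ([a,b] + δ(b) - ε(a), δε - εδ)`. -/
def affBr {A : Type*} [LieRing A] (p q : A × (A →+ A)) : A × (A →+ A) :=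
  (⁅p.1, q.1⁆ + p.2 q.1 - q.2 p.1, p.2.comp q.2 - q.2.comp p.2)

/-- A t-bijective sub Lie ring of `aff(𝔞)`: a set of pairs `(a, δ)` with each
`δ` a derivation, closed under the Lie ring operations of `aff(𝔞)`, such that
the projection to `𝔞` is bijective. -/
structure TSub (A : Type*) [LieRing A] where
  S : Set (A × (A →+ A))
  der : ∀ p ∈ S, ∀ a b : A, p.2 ⁅a, b⁆ = ⁅p.2 a, b⁆ + ⁅a, p.2 b⁆
  zero_mem : (0 : A × (A →+ A)) ∈ S
  add_mem : ∀ p ∈ S, ∀ q ∈ S, p + q ∈ S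
  neg_mem : ∀ p ∈ S, -p ∈ S
  br_mem : ∀ p ∈ S, ∀ q ∈ S, affBr p q ∈ S
  tbij : Function.Bijective fun p : S => (p : A × (A →+ A)).1

namespace Stmt11Aux

variable {A : Type*} [LieRing A]

lemma PostLieOp.ext' {P Q : PostLieOp A} (h : P.t = Q.t) : P = Q := by
  cases P; cases Q; cases h; rfl

lemma TSub.ext' {T T' : TSub A} (h : T.S = T'.S) : T = T' := by
  cases T; cases T'; cases h; rfl

/-- Forward map: post-Lie structure to t-bijective sub Lie ring. -/
def fwd (P : PostLieOp A) : TSub A where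
  S := {p : A × (A →+ A) | p.2 = P.t p.1}
  der := by
    rintro ⟨a, δ⟩ h b c
    simp only [Set.mem_setOf_eq] at h
    subst h
    exact P.ax1 a b c
  zero_mem := by simp [Set.mem_setOf_eq]
  add_mem := by
    rintro ⟨a, δ⟩ h ⟨b, ε⟩ h'
    simp only [Set.mem_setOf_eq] at *
    simp [h, h']
  neg_mem := by
    rintro ⟨a, δ⟩ h
    simp only [Set.mem_setOf_eq] at *
    simp [h]
  br_mem := by
    rintro ⟨a, δ⟩ h ⟨b, ε⟩ h'
    simp only [Set.mem_setOf_eq] at *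
    subst h; subst h'
    ext z
    simp only [affBr, AddMonoidHom.sub_apply, AddMonoidHom.coe_comp, Function.comp_apply,
      map_add, map_sub, AddMonoidHom.add_apply]
    rw [P.ax2]
    abel
  tbij := by
    constructor
    · rintro ⟨⟨a, δ⟩, h⟩ ⟨⟨b, ε⟩, h'⟩ hab
      simp only [Set.mem_setOf_eq] at h h'
      simp only at hab
      subst hab
      simp [Subtype.ext_iff, Prod.ext_iff, h, h']
    · intro a
      exact ⟨⟨(a, P.t a), rfl⟩, rfl⟩

noncomputable def bwdE (T : TSub A) : T.S ≃ A := Equiv.ofBijective _ T.tbij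

lemma fst_symm (T : TSub A) (a : A) : ((bwdE T).symm a : A × (A →+ A)).1 = a :=
  (bwdE T).apply_symm_apply a

lemma symm_eq (T : TSub A) (p : A × (A →+ A)) (hp : p ∈ T.S) :
    (bwdE T).symm p.1 = ⟨p, hp⟩ :=
  (bwdE T).symm_apply_eq.mpr rfl

noncomputable def Lfun (T : TSub A) (a : A) : A →+ A := ((bwdE T).symm a : A × (A →+ A)).2

lemma mem_val (T : TSub A) (a : A) : ((bwdE T).symm a : A × (A →+ A)) ∈ T.S :=
  ((bwdE T).symm a).2

lemma val_eq (T : TSub A) (a : A) :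
    ((bwdE T).symm a : A × (A →+ A)) = (a, Lfun T a) :=
  Prod.ext (fst_symm T a) rfl

lemma L_add (T : TSub A) (a b : A) : Lfun T (a + b) = Lfun T a + Lfun T b := by
  have hm := T.add_mem _ (mem_val T a) _ (mem_val T b)
  rw [val_eq T a, val_eq T b] at hm
  have h2 := symm_eq T _ hm
  have : ((a, Lfun T a) + (b, Lfun T b) : A × (A →+ A)).1 = a + b := rfl
  rw [this] at h2
  have := congrArg (fun p : T.S => (p : A × (A →+ A)).2) h2
  simpa [Lfun] using this

/-- The bundled map. -/
noncomputable def tmap (T : TSub A) : A →+ A →+ A := AddMonoidHom.mk' (Lfun T) (L_add T)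

lemma tmap_apply (T : TSub A) (a : A) : tmap T a = Lfun T a := rfl

/-- Inverse map. -/
noncomputable def bwd (T : TSub A) : PostLieOp A where
  t := tmap T
  ax1 := fun x y z => T.der _ (mem_val T x) y z
  ax2 := by
    intro x y z
    have hm := T.br_mem _ (mem_val T x) _ (mem_val T y)
    rw [val_eq T x, val_eq T y] at hm
    have h2 := symm_eq T _ hm
    set q := affBr (x, Lfun T x) (y, Lfun T y) with hq
    have hfst : q.1 = ⁅x, y⁆ + Lfun T x y - Lfun T y x := rfl
    have h3 := congrArg (fun p : T.S => (p : A × (A →+ A)).2) h2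
    simp only at h3
    -- h3 : Lfun T q.1 = q.2  (after unfolding)
    have h4 : Lfun T (⁅x, y⁆ + Lfun T x y - Lfun T y x)
        = (Lfun T x).comp (Lfun T y) - (Lfun T y).comp (Lfun T x) := by
      rw [← hfst]
      exact h3
    have h5 : tmap T (⁅x, y⁆ + tmap T x y - tmap T y x)
        = (tmap T x).comp (tmap T y) - (tmap T y).comp (tmap T x) := h4
    rw [map_sub, map_add] at h5
    have h6 := congrArg (fun f : A →+ A => f z) h5
    simp only [AddMonoidHom.sub_apply, AddMonoidHom.add_apply, AddMonoidHom.coe_comp,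
      Function.comp_apply] at h6
    rw [sub_sub_sub_comm, ← h6]
    abel

lemma left_inv (P : PostLieOp A) : bwd (fwd P) = P := by
  apply PostLieOp.ext'
  ext a z
  show Lfun (fwd P) a z = P.t a z
  have h := mem_val (fwd P) a
  have h' : Lfun (fwd P) a = P.t (((bwdE (fwd P)).symm a : A × (A →+ A)).1) := h
  rw [fst_symm] at h'
  rw [h']

lemma right_inv (T : TSub A) : fwd (bwd T) = T := by
  apply TSub.ext'
  ext p
  constructor
  · intro hp
    -- hp : p.2 = tmap T p.1
    have : p = ((bwdE T).symm p.1 : A × (A →+ A)) := by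
      rw [val_eq]
      exact Prod.ext rfl hp
    rw [this]
    exact mem_val T p.1
  · intro hp
    have h2 := symm_eq T p hp
    have h3 := congrArg (fun q : T.S => (q : A × (A →+ A)).2) h2
    exact (h3.symm : p.2 = Lfun T p.1)

end Stmt11Aux

open Stmt11Aux in
/-- For a Lie ring `𝔞` there is a bijective correspondence between post-Lie
ring structures `▷` on `𝔞` and t-bijective sub Lie rings of `aff(𝔞)`, sending
`▷` to `{(a, L_a) | a ∈ 𝔞}`. -/
theorem stmt11 {A : Type*} [LieRing A] :
    ∃ e : PostLieOp A ≃ TSub A,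
      ∀ P : PostLieOp A,
        (e P).S = {p : A × (A →+ A) | p.2 = P.t p.1} := by
  exact ⟨⟨fwd, bwd, left_inv, right_inv⟩, fun P => rfl⟩
end

section
/- Let (𝔞, ▷) be a post-Lie ring and define L¹(𝔞) = 𝔞 and L^{i+1}(𝔞) the additive subgroup generated by all a▷b and [a,b] with a ∈ 𝔞, b ∈ L^i(𝔞). Then [L^i(𝔞), L^j(𝔞)] ⊆ L^{i+j}(𝔞) for all i, j ≥ 1. -/
/-- Let `(𝔞,▷)` be a post-Lie ring and `L¹(𝔞) = 𝔞`,
`L^{i+1}(𝔞) = ⟨a▷b, [a,b] : a ∈ 𝔞, b ∈ L^i(𝔞)⟩₊`. Then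
`[L^i(𝔞), L^j(𝔞)] ⊆ L^{i+j}(𝔞)`. (Here `Ls i = L^{i+1}(𝔞)`.) -/
theorem stmt12 {A : Type*} [LieRing A] (t : A →+ A →+ A)
    (h1 : ∀ x y z : A, t x ⁅y, z⁆ = ⁅t x y, z⁆ + ⁅y, t x z⁆)
    (h2 : ∀ x y z : A, t ⁅x, y⁆ z =
      (t x (t y z) - t (t x y) z) - (t y (t x z) - t (t y x) z))
    (Ls : ℕ → AddSubgroup A) (h0 : Ls 0 = ⊤)
    (hs : ∀ i, Ls (i + 1) = AddSubgroup.closure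
      {x : A | ∃ a b : A, b ∈ Ls i ∧ (x = t a b ∨ x = ⁅a, b⁆)}) :
    ∀ i j, ∀ x ∈ Ls i, ∀ y ∈ Ls j, ⁅x, y⁆ ∈ Ls (i + j + 1) := by
  have genT : ∀ k (a b : A), b ∈ Ls k → t a b ∈ Ls (k + 1) := by
    intro k a b hb
    rw [hs]
    exact AddSubgroup.subset_closure ⟨a, b, hb, Or.inl rfl⟩
  have genL : ∀ k (a b : A), b ∈ Ls k → ⁅a, b⁆ ∈ Ls (k + 1) := by
    intro k a b hb
    rw [hs]
    exact AddSubgroup.subset_closure ⟨a, b, hb, Or.inr rfl⟩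
  intro i
  induction i with
  | zero =>
    intro j x _ y hy
    simpa using genL j x y hy
  | succ i ih =>
    intro j x hx y hy
    have key : i + 1 + j + 1 = i + (j + 1) + 1 := by omega
    rw [hs] at hx
    induction hx using AddSubgroup.closure_induction with
    | mem z hz =>
      obtain ⟨a, b, hb, hz⟩ := hz
      rcases hz with rfl | rfl
      · -- z = t a b
        have e : ⁅t a b, y⁆ = t a ⁅b, y⁆ - ⁅b, t a y⁆ :=
          eq_sub_iff_add_eq.mpr (h1 a b y).symm
        rw [e]
        refine sub_mem ?_ ?_
        · have hby : ⁅b, y⁆ ∈ Ls (i + j + 1) := ih j b hb y hy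
          rw [show i + 1 + j + 1 = i + j + 1 + 1 from by omega]
          exact genT (i + j + 1) a _ hby
        · have hty : t a y ∈ Ls (j + 1) := genT j a y hy
          have := ih (j + 1) b hb _ hty
          rwa [key]
      · -- z = ⁅a, b⁆
        rw [lie_lie]
        refine sub_mem ?_ ?_
        · have hby : ⁅b, y⁆ ∈ Ls (i + j + 1) := ih j b hb y hy
          rw [show i + 1 + j + 1 = i + j + 1 + 1 from by omega]
          exact genL (i + j + 1) a _ hby
        · have hay : ⁅a, y⁆ ∈ Ls (j + 1) := genL j a y hy
          have := ih (j + 1) b hb _ hay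
          rwa [key]
    | zero => simpa using (Ls (i + 1 + j + 1)).zero_mem
    | add u v _ _ hu hv => simpa [add_lie] using add_mem hu hv
    | neg u _ hu => simpa [neg_lie] using neg_mem hu
end

section
/- A post-Lie ring (𝔞, ▷) is L-nilpotent (L^{k+1}(𝔞) = 0 for some k) if and only if (𝔞, ▷) is left nilpotent (the chain 𝔞¹ = 𝔞, 𝔞^{i+1} = ⟨𝔞 ▷ 𝔞^i⟩ reaches 0) and the Lie ring 𝔞 is nilpotent. -/
namespace Stmt13Aux

variable {A : Type*} [LieRing A] (t : A →+ A →+ A)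

/-- left-normed t-words with `m` applications of `t`. -/
inductive TW : ℕ → A → Prop
  | base (a : A) : TW 0 a
  | step {m : ℕ} {w : A} (a : A) : TW m w → TW (m + 1) (t a w)

/-- right-normed brackets of t-words; first index = total number of operations,
second = number of brackets. -/
inductive NF : ℕ → ℕ → A → Prop
  | tw {m : ℕ} {w : A} : TW t m w → NF m 0 w
  | br {m n k : ℕ} {w x : A} : TW t m w → NF n k x → NF (m + n + 1) (k + 1) ⁅w, x⁆

lemma closure_map {B : Type*} [AddGroup B] (f : B →+ B) {S T : Set B}
    (h : ∀ y ∈ S, f y ∈ AddSubgroup.closure T) {x : B}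
    (hx : x ∈ AddSubgroup.closure S) : f x ∈ AddSubgroup.closure T :=
  (AddSubgroup.closure_le ((AddSubgroup.closure T).comap f)).2 h hx

lemma NF_t (h1 : ∀ x y z : A, t x ⁅y, z⁆ = ⁅t x y, z⁆ + ⁅y, t x z⁆)
    {n k : ℕ} {x : A} (hx : NF t n k x) (a : A) :
    t a x ∈ AddSubgroup.closure {y : A | ∃ k', NF t (n + 1) k' y} := by
  induction hx with
  | tw h => exact AddSubgroup.subset_closure ⟨0, NF.tw (h.step a)⟩
  | @br m n k w x hw hx ih =>
    rw [h1]
    refine AddSubgroup.add_mem _ (AddSubgroup.subset_closure ⟨k + 1, ?_⟩) ?_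
    · have e : (m + 1) + n + 1 = m + n + 1 + 1 := by omega
      exact e ▸ NF.br (hw.step a) hx
    · refine closure_map (AddMonoidHom.mk' (fun z => ⁅w, z⁆) (lie_add w)) ?_ ih
      rintro y ⟨k', hy⟩
      refine AddSubgroup.subset_closure ⟨k' + 1, ?_⟩
      have e : m + (n + 1) + 1 = m + n + 1 + 1 := by omega
      exact e ▸ NF.br hw hy

lemma NF_zero {M : ℕ} (htw : ∀ {m : ℕ} {w : A}, TW t m w → M ≤ m → w = 0)
    {n k : ℕ} {x : A} (hx : NF t n k x)
    (hn : k + (k + 1) * (M - 1) + 1 ≤ n) : x = 0 := by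
  induction hx with
  | @tw m w h => exact htw h (by omega)
  | @br m n k w x hw hx ih =>
    rcases le_or_gt M m with hm | hm
    · rw [htw hw hm, zero_lie]
    · rw [ih ?_, lie_zero]
      have e : (k + 1 + 1) * (M - 1) = (k + 1) * (M - 1) + (M - 1) := by ring
      omega

end Stmt13Aux
/-- A post-Lie ring `(𝔞,▷)` is L-nilpotent (the series `L^{i+1}(𝔞) =
⟨a▷b, [a,b] : b ∈ L^i(𝔞)⟩₊` reaches `0`) iff it is left nilpotent (the series
`𝔞^{i+1} = ⟨a▷b : b ∈ 𝔞^i⟩₊` reaches `0`) and the Lie ring `𝔞` is nilpotent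
(the lower central series reaches `0`). -/
theorem stmt13 {A : Type*} [LieRing A] (t : A →+ A →+ A)
    (h1 : ∀ x y z : A, t x ⁅y, z⁆ = ⁅t x y, z⁆ + ⁅y, t x z⁆)
    (h2 : ∀ x y z : A, t ⁅x, y⁆ z =
      (t x (t y z) - t (t x y) z) - (t y (t x z) - t (t y x) z))
    (Ls : ℕ → AddSubgroup A) (hL0 : Ls 0 = ⊤)
    (hLs : ∀ i, Ls (i + 1) = AddSubgroup.closure
      {x : A | ∃ a b : A, b ∈ Ls i ∧ (x = t a b ∨ x = ⁅a, b⁆)})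
    (as : ℕ → AddSubgroup A) (ha0 : as 0 = ⊤)
    (has : ∀ i, as (i + 1) = AddSubgroup.closure
      {x : A | ∃ a b : A, b ∈ as i ∧ x = t a b})
    (g : ℕ → AddSubgroup A) (hg0 : g 0 = ⊤)
    (hgs : ∀ i, g (i + 1) = AddSubgroup.closure
      {x : A | ∃ a b : A, b ∈ g i ∧ x = ⁅a, b⁆}) :
    (∃ k, Ls k = ⊥) ↔ (∃ k, as k = ⊥) ∧ (∃ k, g k = ⊥) := by
  open Stmt13Aux in
  constructor
  · rintro ⟨k, hk⟩
    -- `as i ≤ Ls i` and `g i ≤ Ls i`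
    have hasL : ∀ i, as i ≤ Ls i := by
      intro i
      induction i with
      | zero => rw [ha0, hL0]
      | succ i ih =>
        rw [has, hLs]
        refine AddSubgroup.closure_mono ?_
        rintro x ⟨a, b, hb, rfl⟩
        exact ⟨a, b, ih hb, Or.inl rfl⟩
    have hgL : ∀ i, g i ≤ Ls i := by
      intro i
      induction i with
      | zero => rw [hg0, hL0]
      | succ i ih =>
        rw [hgs, hLs]
        refine AddSubgroup.closure_mono ?_
        rintro x ⟨a, b, hb, rfl⟩
        exact ⟨a, b, ih hb, Or.inr rfl⟩
    exact ⟨⟨k, le_bot_iff.1 (hk ▸ hasL k)⟩, ⟨k, le_bot_iff.1 (hk ▸ hgL k)⟩⟩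
  · rintro ⟨⟨M, hM⟩, ⟨N, hN⟩⟩
    -- antitone
    have as_anti : ∀ i, as (i + 1) ≤ as i := by
      intro i
      induction i with
      | zero => rw [ha0]; exact le_top
      | succ i ih =>
        rw [has (i + 1)]
        refine (AddSubgroup.closure_le _).2 ?_
        rintro x ⟨a, b, hb, rfl⟩
        rw [has i]
        exact AddSubgroup.subset_closure ⟨a, b, ih hb, rfl⟩
    have as_le : ∀ {i j : ℕ}, i ≤ j → as j ≤ as i := by
      intro i j hij
      induction j with
      | zero => exact (Nat.le_zero.1 hij) ▸ le_rfl
      | succ j ih =>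
        rcases Nat.lt_or_ge i (j + 1) with h | h
        · exact le_trans (as_anti j) (ih (by omega))
        · exact (Nat.le_antisymm hij h) ▸ le_rfl
    have g_anti : ∀ i, g (i + 1) ≤ g i := by
      intro i
      induction i with
      | zero => rw [hg0]; exact le_top
      | succ i ih =>
        rw [hgs (i + 1)]
        refine (AddSubgroup.closure_le _).2 ?_
        rintro x ⟨a, b, hb, rfl⟩
        rw [hgs i]
        exact AddSubgroup.subset_closure ⟨a, b, ih hb, rfl⟩
    have g_le : ∀ {i j : ℕ}, i ≤ j → g j ≤ g i := by
      intro i j hij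
      induction j with
      | zero => exact (Nat.le_zero.1 hij) ▸ le_rfl
      | succ j ih =>
        rcases Nat.lt_or_ge i (j + 1) with h | h
        · exact le_trans (g_anti j) (ih (by omega))
        · exact (Nat.le_antisymm hij h) ▸ le_rfl
    -- t-words lie in the `as` series
    have tw_mem : ∀ {m : ℕ} {w : A}, TW t m w → w ∈ as m := by
      intro m w h
      induction h with
      | base a => rw [ha0]; trivial
      | @step m w a _ ih =>
        rw [has]; exact AddSubgroup.subset_closure ⟨a, w, ih, rfl⟩
    -- normal forms with `k` brackets lie in `g k`
    have nf_g : ∀ {n k : ℕ} {x : A}, NF t n k x → x ∈ g k := by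
      intro n k x h
      induction h with
      | tw _ => rw [hg0]; trivial
      | @br m n k w x _ _ ih =>
        rw [hgs]; exact AddSubgroup.subset_closure ⟨w, x, ih, rfl⟩
    have htw0 : ∀ {m : ℕ} {w : A}, TW t m w → M ≤ m → w = 0 := by
      intro m w h hm
      have : w ∈ as M := as_le hm (tw_mem h)
      rw [hM] at this; exact this
    -- main induction: `Ls i` is spanned by normal forms of weight `i`
    have main : ∀ i, Ls i ≤ AddSubgroup.closure {x : A | ∃ k, NF t i k x} := by
      intro i
      induction i with
      | zero =>
        intro x _
        exact AddSubgroup.subset_closure ⟨0, NF.tw (TW.base x)⟩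
      | succ i ih =>
        rw [hLs]
        refine (AddSubgroup.closure_le _).2 ?_
        rintro x ⟨a, b, hb, rfl | rfl⟩
        · refine closure_map (t a) ?_ (ih hb)
          rintro y ⟨k, hy⟩
          exact NF_t t h1 hy a
        · refine closure_map (AddMonoidHom.mk' (fun z => ⁅a, z⁆) (lie_add a)) ?_ (ih hb)
          rintro y ⟨k, hy⟩
          refine AddSubgroup.subset_closure ⟨k + 1, ?_⟩
          show NF t (i + 1) (k + 1) ⁅a, y⁆
          have e : 0 + i + 1 = i + 1 := by omega
          exact e ▸ NF.br (TW.base a) hy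
    refine ⟨N * M + N, ?_⟩
    refine le_bot_iff.1 (le_trans (main _) ?_)
    refine (AddSubgroup.closure_le _).2 ?_
    rintro x ⟨k, hx⟩
    rcases Nat.lt_or_ge k N with hk | hk
    · -- few brackets: some t-word is long
      have hx0 : x = 0 := by
        refine NF_zero t htw0 hx ?_
        have h1' : k + 1 ≤ N := hk
        have h2' : (k + 1) * (M - 1) ≤ N * M := le_trans
          (Nat.mul_le_mul h1' (Nat.sub_le M 1)) le_rfl
        omega
      simp [hx0]
    · have : x ∈ g N := g_le hk (nf_g hx)
      rw [hN] at this; exact this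
end

section
/- Let (𝔞, ▷) be an L-nilpotent post-Lie ring of class k (L^{k+1}(𝔞) = 0, L^k(𝔞) ≠ 0). Then the Lie ring 𝔞° with bracket {a,b} = [a,b] + a▷b − b▷a is nilpotent of class at most k, and the k-th term of the lower central series of 𝔞° is contained in the annihilator Ann(𝔞) = {a | ∀b, a▷b = b▷a = [a,b] = 0}. -/
/-- The circle bracket `{a,b} = [a,b] + a▷b - b▷a` of a post-Lie ring. -/
def cbr {A : Type*} [LieRing A] (t : A →+ A →+ A) (a b : A) : A :=
  ⁅a, b⁆ + t a b - t b a

/-- Let `(𝔞,▷)` be an L-nilpotent post-Lie ring of class `k` (`L^{k+1}(𝔞) = 0`,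
`L^k(𝔞) ≠ 0`; here `Ls i = L^{i+1}(𝔞)`). Then `𝔞°` is nilpotent of class at
most `k` (its lower central series `gc`, with `gc i = γ^{i+1}(𝔞°)`, satisfies
`gc k = 0`) and the `k`-th term `γ^k(𝔞°) = gc (k-1)` is contained in the
annihilator `Ann(𝔞)`. -/
theorem stmt14 {A : Type*} [LieRing A] (t : A →+ A →+ A)
    (h1 : ∀ x y z : A, t x ⁅y, z⁆ = ⁅t x y, z⁆ + ⁅y, t x z⁆)
    (h2 : ∀ x y z : A, t ⁅x, y⁆ z =
      (t x (t y z) - t (t x y) z) - (t y (t x z) - t (t y x) z))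
    (Ls : ℕ → AddSubgroup A) (hL0 : Ls 0 = ⊤)
    (hLs : ∀ i, Ls (i + 1) = AddSubgroup.closure
      {x : A | ∃ a b : A, b ∈ Ls i ∧ (x = t a b ∨ x = ⁅a, b⁆)})
    (k : ℕ) (hk : Ls k = ⊥) (hk' : 1 ≤ k → Ls (k - 1) ≠ ⊥)
    (gc : ℕ → AddSubgroup A) (hgc0 : gc 0 = ⊤)
    (hgcs : ∀ i, gc (i + 1) = AddSubgroup.closure
      {x : A | ∃ a b : A, b ∈ gc i ∧ x = cbr t a b}) :
    gc k = ⊥ ∧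
    ∀ a ∈ gc (k - 1), ∀ b : A, t a b = 0 ∧ t b a = 0 ∧ ⁅a, b⁆ = 0 := by
  -- membership of generators of `Ls (i+1)`
  have memT : ∀ i (a b : A), b ∈ Ls i → t a b ∈ Ls (i + 1) := by
    intro i a b hb
    rw [hLs i]
    exact AddSubgroup.subset_closure ⟨a, b, hb, Or.inl rfl⟩
  have memB : ∀ i (a b : A), b ∈ Ls i → ⁅a, b⁆ ∈ Ls (i + 1) := by
    intro i a b hb
    rw [hLs i]
    exact AddSubgroup.subset_closure ⟨a, b, hb, Or.inr rfl⟩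
  -- the key cancellation identity
  have key : ∀ c d a : A, t (cbr t c d) a = t c (t d a) - t d (t c a) := by
    intro c d a
    have h := h2 c d a
    simp only [cbr, map_add, map_sub, AddMonoidHom.add_apply, AddMonoidHom.sub_apply]
    rw [h]
    abel
  -- main induction
  have main : ∀ i, gc i ≤ Ls i ∧
      ∀ b ∈ gc i, ∀ j (a : A), a ∈ Ls j → t b a ∈ Ls (i + j + 1) := by
    intro i
    induction i with
    | zero =>
      refine ⟨by rw [hgc0, hL0], ?_⟩
      intro b _ j a ha
      simpa [Nat.zero_add] using memT j b a ha
    | succ i ih =>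
      obtain ⟨ih1, ih2⟩ := ih
      have hsub : gc (i + 1) ≤ Ls (i + 1) := by
        rw [hgcs i]
        rw [AddSubgroup.closure_le]
        rintro x ⟨a, b, hb, rfl⟩
        have hb' : b ∈ Ls i := ih1 hb
        have e1 : ⁅a, b⁆ ∈ Ls (i + 1) := memB i a b hb'
        have e2 : t a b ∈ Ls (i + 1) := memT i a b hb'
        have e3 : t b a ∈ Ls (i + 1) := by
          have := ih2 b hb 0 a (by rw [hL0]; trivial)
          simpa using this
        show cbr t a b ∈ Ls (i + 1)
        unfold cbr
        exact sub_mem (add_mem e1 e2) e3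
      refine ⟨hsub, ?_⟩
      intro b hb j a ha
      rw [hgcs i] at hb
      induction hb using AddSubgroup.closure_induction with
      | mem x hx =>
        obtain ⟨c, d, hd, rfl⟩ := hx
        rw [key c d a]
        have m1 : t d a ∈ Ls (i + j + 1) := ih2 d hd j a ha
        have m2 : t c (t d a) ∈ Ls (i + j + 1 + 1) := memT _ _ _ m1
        have m3 : t c a ∈ Ls (j + 1) := memT j c a ha
        have m4 : t d (t c a) ∈ Ls (i + (j + 1) + 1) := ih2 d hd (j + 1) _ m3
        have hcast : i + (j + 1) + 1 = i + 1 + j + 1 := by omega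
        rw [hcast] at m4
        have hcast2 : i + j + 1 + 1 = i + 1 + j + 1 := by omega
        rw [hcast2] at m2
        exact sub_mem m2 m4
      | zero =>
        simpa using (Ls (i + 1 + j + 1)).zero_mem
      | add x y hx hy px py =>
        have : t (x + y) a = t x a + t y a := by simp [map_add]
        rw [this]
        exact add_mem px py
      | neg x hx px =>
        have : t (-x) a = -(t x a) := by simp [map_neg]
        rw [this]
        exact neg_mem px
  -- annihilator statement
  have ann : ∀ a ∈ gc (k - 1), ∀ b : A, t a b = 0 ∧ t b a = 0 ∧ ⁅a, b⁆ = 0 := by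
    cases k with
    | zero =>
      -- A is trivial
      have htriv : ∀ x : A, x = 0 := by
        intro x
        have : x ∈ Ls 0 := by rw [hL0]; trivial
        rw [hk] at this
        simpa using this
      intro a _ b
      refine ⟨?_, ?_, ?_⟩ <;> exact htriv _
    | succ m =>
      intro a ha b
      have ha' : a ∈ gc m := by simpa using ha
      have haL : a ∈ Ls m := (main m).1 ha'
      have z1 : t a b = 0 := by
        have := (main m).2 a ha' 0 b (by rw [hL0]; trivial)
        rw [show m + 0 + 1 = m + 1 from rfl, hk] at this
        simpa using this
      have z2 : t b a = 0 := by
        have := memT m b a haL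
        rw [hk] at this
        simpa using this
      have z3 : ⁅a, b⁆ = 0 := by
        have := memB m b a haL
        rw [hk] at this
        have hba : ⁅b, a⁆ = 0 := by simpa using this
        rw [← lie_skew, hba, neg_zero]
      exact ⟨z1, z2, z3⟩
  refine ⟨?_, ann⟩
  cases k with
  | zero =>
    have : (⊤ : AddSubgroup A) = ⊥ := by rw [← hL0, hk]
    rw [hgc0, this]
  | succ m =>
    rw [hgcs m, eq_bot_iff, AddSubgroup.closure_le]
    rintro x ⟨a, b, hb, rfl⟩
    have hb' : b ∈ gc (m + 1 - 1) := by simpa using hb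
    obtain ⟨z1, z2, z3⟩ := ann b hb' a
    have hab : ⁅a, b⁆ = 0 := by rw [← lie_skew, z3, neg_zero]
    have hz : cbr t a b = 0 := by
      unfold cbr
      rw [hab, z2, z1]
      abel
    show cbr t a b ∈ (⊥ : AddSubgroup A)
    simp [hz]
end

section
/- Let A be a skew brace and define L¹(A) = A and L^{i+1}(A) the subgroup of (A,·) generated by all a*b = a⁻¹·(a∘b)·b⁻¹ and all commutators a·b·a⁻¹·b⁻¹ with a ∈ A, b ∈ L^i(A). Then each L^i(A) is a strong left ideal of A (a normal subgroup of (A,·) stable under all λ_a) and [L^i(A), L^j(A)] ⊆ L^{i+j}(A) for all i, j ≥ 1, where brackets denote group commutators in (A,·). -/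
/-- A skew brace structure on a group `(A,·)`: a second group operation `∘`
(with identity `e` and inverse `cinv`) satisfying
`a ∘ (b · c) = (a ∘ b) · a⁻¹ · (a ∘ c)`. -/
structure SkewBrace (A : Type*) [Group A] where
  circ : A → A → A
  e : A
  cinv : A → A
  circ_assoc : ∀ a b c, circ (circ a b) c = circ a (circ b c)
  e_circ : ∀ a, circ e a = a
  circ_e : ∀ a, circ a e = a
  cinv_circ : ∀ a, circ (cinv a) a = e
  circ_cinv : ∀ a, circ a (cinv a) = e
  compat : ∀ a b c, circ a (b * c) = circ a b * a⁻¹ * circ a c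

/-- The λ-map of a skew brace: `λ_a(b) = a⁻¹ · (a ∘ b)`. -/
def SkewBrace.lam {A : Type*} [Group A] (B : SkewBrace A) (a b : A) : A :=
  a⁻¹ * B.circ a b

section Aux

variable {A : Type*} [Group A] (B : SkewBrace A)

theorem SkewBrace.circ_one (a : A) : B.circ a 1 = a := by
  have h := B.compat a 1 1
  rw [one_mul] at h
  have h2 : (1:A) = a⁻¹ * B.circ a 1 := by
    have := congrArg (fun z => (B.circ a 1)⁻¹ * z) h
    simpa [mul_assoc] using this
  have h3 := congrArg (fun z => a * z) h2
  simpa [← mul_assoc] using h3.symm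

theorem SkewBrace.lam_mul (a b c : A) : B.lam a (b * c) = B.lam a b * B.lam a c := by
  unfold SkewBrace.lam
  rw [B.compat]
  group

theorem SkewBrace.lam_one (a : A) : B.lam a 1 = 1 := by
  unfold SkewBrace.lam
  rw [B.circ_one, inv_mul_cancel]

/-- λ as a monoid hom (it is a group endomorphism of `(A,·)`). -/
def SkewBrace.lamHom (a : A) : A →* A where
  toFun := B.lam a
  map_one' := B.lam_one a
  map_mul' := B.lam_mul a

theorem SkewBrace.lam_inv (a b : A) : B.lam a b⁻¹ = (B.lam a b)⁻¹ :=
  map_inv (B.lamHom a) b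

theorem SkewBrace.lam_circ (a b c : A) :
    B.lam (B.circ a b) c = B.lam a (B.lam b c) := by
  unfold SkewBrace.lam
  rw [B.compat, ← B.circ_assoc]
  have hb : B.circ a b⁻¹ = a * (B.circ a b)⁻¹ * a := by
    have h := B.compat a b b⁻¹
    rw [mul_inv_cancel, B.circ_one] at h
    have := congrArg (fun z => a * (B.circ a b)⁻¹ * z) h
    simpa [mul_assoc] using this.symm
  rw [hb]
  group

end Aux

/-- Let `A` be a skew brace and `L¹(A) = A`, `L^{i+1}(A)` the subgroup of
`(A,·)` generated by all `a * b = a⁻¹·(a∘b)·b⁻¹` and all commutators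
`a·b·a⁻¹·b⁻¹` with `b ∈ L^i(A)` (here `Ls i = L^{i+1}(A)`). Then each
`L^i(A)` is a strong left ideal and `[L^i(A), L^j(A)] ⊆ L^{i+j}(A)`. -/
theorem stmt15 {A : Type*} [Group A] (B : SkewBrace A)
    (Ls : ℕ → Subgroup A) (h0 : Ls 0 = ⊤)
    (hs : ∀ i, Ls (i + 1) = Subgroup.closure
      {x : A | ∃ a b : A, b ∈ Ls i ∧
        (x = a⁻¹ * B.circ a b * b⁻¹ ∨ x = a * b * a⁻¹ * b⁻¹)}) :
    (∀ i, (Ls i).Normal) ∧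
    (∀ i, ∀ a : A, ∀ x ∈ Ls i, B.lam a x ∈ Ls i) ∧
    (∀ i j, ∀ x ∈ Ls i, ∀ y ∈ Ls j, x * y * x⁻¹ * y⁻¹ ∈ Ls (i + j + 1)) := by
  -- star generators
  have hst : ∀ i (a b : A), b ∈ Ls i → B.lam a b * b⁻¹ ∈ Ls (i + 1) := by
    intro i a b hb
    rw [hs i]
    exact Subgroup.subset_closure ⟨a, b, hb, Or.inl (by rw [SkewBrace.lam])⟩
  -- commutator generators
  have hcm : ∀ i (a b : A), b ∈ Ls i → a * b * a⁻¹ * b⁻¹ ∈ Ls (i + 1) := by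
    intro i a b hb
    rw [hs i]
    exact Subgroup.subset_closure ⟨a, b, hb, Or.inr rfl⟩
  -- the series is decreasing
  have hdec : ∀ i, Ls (i + 1) ≤ Ls i := by
    intro i
    induction i with
    | zero => rw [h0]; exact le_top
    | succ n ih =>
      rw [hs (n + 1), Subgroup.closure_le]
      rintro x ⟨a, b, hb, hx | hx⟩
      · have h1 : x = B.lam a b * b⁻¹ := by rw [hx]; rfl
        rw [h1]
        exact hst n a b (ih hb)
      · exact hx ▸ hcm n a b (ih hb)
  have hle : ∀ i j, i ≤ j → Ls j ≤ Ls i := by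
    intro i j hij
    induction hij with
    | refl => exact le_rfl
    | step _ ih => exact le_trans (hdec _) ih
  -- normality
  have hnorm : ∀ i, (Ls i).Normal := by
    intro i
    cases i with
    | zero => rw [h0]; infer_instance
    | succ n =>
      constructor
      intro x hx g
      have h1 : g * x * g⁻¹ = (g * x * g⁻¹ * x⁻¹) * x := by group
      rw [h1]
      exact mul_mem (hcm n g x (hdec n hx)) hx
  -- λ-stability
  have hlam : ∀ i (a : A), ∀ x ∈ Ls i, B.lam a x ∈ Ls i := by
    intro i
    induction i with
    | zero => intro a x _; rw [h0]; trivial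
    | succ n ih =>
      intro a x hx
      have : Ls (n + 1) ≤ (Ls (n + 1)).comap (B.lamHom a) := by
        nth_rewrite 1 [hs n]
        rw [Subgroup.closure_le]
        rintro y ⟨a', b, hb, hy | hy⟩
        · have hy' : y = B.lam a' b * b⁻¹ := by rw [hy, SkewBrace.lam, mul_assoc]
          have hval : B.lamHom a y =
              (B.lam (B.circ a a') b * b⁻¹) * (B.lam a b * b⁻¹)⁻¹ := by
            show B.lam a y = _
            rw [hy', B.lam_mul, B.lam_inv, B.lam_circ]
            group
          show B.lamHom a y ∈ Ls (n + 1)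
          rw [hval]
          exact mul_mem (hst n (B.circ a a') b hb) (inv_mem (hst n a b hb))
        · have hval : B.lamHom a y =
              B.lam a a' * B.lam a b * (B.lam a a')⁻¹ * (B.lam a b)⁻¹ := by
            show B.lam a y = _
            rw [hy, B.lam_mul, B.lam_mul, B.lam_mul, B.lam_inv, B.lam_inv]
          show B.lamHom a y ∈ Ls (n + 1)
          rw [hval]
          exact hcm n (B.lam a a') (B.lam a b) (ih a b hb)
      exact this hx
  -- commutator containment
  have hcomm : ∀ j i, ∀ x ∈ Ls i, ∀ y ∈ Ls j, x * y * x⁻¹ * y⁻¹ ∈ Ls (i + j + 1) := by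
    intro j
    induction j with
    | zero =>
      intro i x hx y _
      have h1 : x * y * x⁻¹ * y⁻¹ = (y * x * y⁻¹ * x⁻¹)⁻¹ := by group
      rw [h1]
      exact inv_mem (hcm i y x hx)
    | succ n ih =>
      intro i x hx y hy
      rw [hs n] at hy
      induction hy using Subgroup.closure_induction with
      | one =>
        have h1 : x * 1 * x⁻¹ * 1⁻¹ = 1 := by group
        rw [h1]; exact one_mem _
      | mul y z _ _ py pz =>
        have h1 : x * (y * z) * x⁻¹ * (y * z)⁻¹ =
            (x * y * x⁻¹ * y⁻¹) * (y * (x * z * x⁻¹ * z⁻¹) * y⁻¹) := by group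
        rw [h1]
        exact mul_mem py ((hnorm _).conj_mem _ pz y)
      | inv y _ py =>
        have h1 : x * y⁻¹ * x⁻¹ * (y⁻¹)⁻¹ = y⁻¹ * (x * y * x⁻¹ * y⁻¹)⁻¹ * y⁻¹⁻¹ := by group
        rw [h1]
        exact (hnorm _).conj_mem _ (inv_mem py) y⁻¹
      | mem y hy =>
        obtain ⟨a, d, hd, hy | hy⟩ := hy
        · -- star generator case
          subst hy
          have hm : x * d * x⁻¹ * d⁻¹ ∈ Ls (i + n + 1) := ih i x hx d hd
          have hstc : B.lam a (x * d * x⁻¹ * d⁻¹) * (x * d * x⁻¹ * d⁻¹)⁻¹ ∈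
              Ls (i + n + 2) := hst (i + n + 1) a _ hm
          have hlc : B.lam a (x * d * x⁻¹ * d⁻¹) =
              B.lam a x * B.lam a d * (B.lam a x)⁻¹ * (B.lam a d)⁻¹ := by
            rw [B.lam_mul, B.lam_mul, B.lam_mul, B.lam_inv, B.lam_inv]
          rw [hlc] at hstc
          have hstx : B.lam a x * x⁻¹ ∈ Ls (i + 1) := hst i a x hx
          have hstd : B.lam a d * d⁻¹ ∈ Ls (n + 1) := hst n a d hd
          have hg : (x * d * x⁻¹ * d⁻¹) * (B.lam a d * d⁻¹) * d ∈ Ls n :=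
            mul_mem (mul_mem (hle n (i + n + 1) (by omega) hm) (hdec n hstd)) hd
          -- factor 1 : conjugate of st(c)
          have hF1 : (B.lam a x * x⁻¹)⁻¹ *
              (B.lam a x * B.lam a d * (B.lam a x)⁻¹ * (B.lam a d)⁻¹ *
                (x * d * x⁻¹ * d⁻¹)⁻¹) * (B.lam a x * x⁻¹) ∈ Ls (i + n + 2) := by
            have := (hnorm (i + n + 2)).conj_mem _ hstc (B.lam a x * x⁻¹)⁻¹
            rwa [inv_inv] at this
          -- factor 2 : [st(x)⁻¹, g]
          have hF2 : (B.lam a x * x⁻¹)⁻¹ *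
              ((x * d * x⁻¹ * d⁻¹) * (B.lam a d * d⁻¹) * d) * (B.lam a x * x⁻¹) *
              ((x * d * x⁻¹ * d⁻¹) * (B.lam a d * d⁻¹) * d)⁻¹ ∈ Ls (i + n + 2) := by
            have := ih (i + 1) ((B.lam a x * x⁻¹)⁻¹) (inv_mem hstx)
              ((x * d * x⁻¹ * d⁻¹) * (B.lam a d * d⁻¹) * d) hg
            rw [show i + 1 + n + 1 = i + n + 2 by omega] at this
            rwa [inv_inv] at this
          -- factor 3 : [c, st(d)]
          have hF3 : (x * d * x⁻¹ * d⁻¹) * (B.lam a d * d⁻¹) * (x * d * x⁻¹ * d⁻¹)⁻¹ *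
              (B.lam a d * d⁻¹)⁻¹ ∈ Ls (i + n + 2) := by
            have h4 := hcm (i + n + 1) (B.lam a d * d⁻¹) (x * d * x⁻¹ * d⁻¹) hm
            have h5 : (x * d * x⁻¹ * d⁻¹) * (B.lam a d * d⁻¹) * (x * d * x⁻¹ * d⁻¹)⁻¹ *
                (B.lam a d * d⁻¹)⁻¹ =
                ((B.lam a d * d⁻¹) * (x * d * x⁻¹ * d⁻¹) * (B.lam a d * d⁻¹)⁻¹ *
                  (x * d * x⁻¹ * d⁻¹)⁻¹)⁻¹ := by group
            rw [h5]
            exact inv_mem h4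
          have key : x * (B.lam a d * d⁻¹) * x⁻¹ * (B.lam a d * d⁻¹)⁻¹ =
              ((B.lam a x * x⁻¹)⁻¹ *
                (B.lam a x * B.lam a d * (B.lam a x)⁻¹ * (B.lam a d)⁻¹ *
                  (x * d * x⁻¹ * d⁻¹)⁻¹) * (B.lam a x * x⁻¹)) *
              ((B.lam a x * x⁻¹)⁻¹ *
                ((x * d * x⁻¹ * d⁻¹) * (B.lam a d * d⁻¹) * d) * (B.lam a x * x⁻¹) *
                ((x * d * x⁻¹ * d⁻¹) * (B.lam a d * d⁻¹) * d)⁻¹) *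
              ((x * d * x⁻¹ * d⁻¹) * (B.lam a d * d⁻¹) * (x * d * x⁻¹ * d⁻¹)⁻¹ *
                (B.lam a d * d⁻¹)⁻¹) := by group
          show x * (a⁻¹ * B.circ a d * d⁻¹) * x⁻¹ * (a⁻¹ * B.circ a d * d⁻¹)⁻¹ ∈
            Ls (i + n + 2)
          have hform : a⁻¹ * B.circ a d * d⁻¹ = B.lam a d * d⁻¹ := rfl
          rw [hform, key]
          exact mul_mem (mul_mem hF1 hF2) hF3
        · -- commutator generator case
          subst hy
          have hm : x * d * x⁻¹ * d⁻¹ ∈ Ls (i + n + 1) := ih i x hx d hd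
          have hx' : a⁻¹ * x * a ∈ Ls i := by
            have := (hnorm i).conj_mem x hx a⁻¹
            simpa using this
          have hm' : (a⁻¹ * x * a) * d * (a⁻¹ * x * a)⁻¹ * d⁻¹ ∈ Ls (i + n + 1) :=
            ih i _ hx' d hd
          have hk : a⁻¹ * x * a * x⁻¹ ∈ Ls (i + 1) := by
            have := hcm i a⁻¹ x hx
            simpa using this
          have hkd : (a⁻¹ * x * a * x⁻¹) * d * (a⁻¹ * x * a * x⁻¹)⁻¹ * d⁻¹ ∈
              Ls (i + n + 2) := by
            have := ih (i + 1) _ hk d hd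
            rwa [show i + 1 + n + 1 = i + n + 2 by omega] at this
          have h1 : (a * d * a⁻¹ * d⁻¹) * (x * d * x⁻¹ * d⁻¹)⁻¹ *
              (a * d * a⁻¹ * d⁻¹)⁻¹ * ((x * d * x⁻¹ * d⁻¹)⁻¹)⁻¹ ∈ Ls (i + n + 2) :=
            hcm (i + n + 1) (a * d * a⁻¹ * d⁻¹) _ (inv_mem hm)
          have h2 : a * ((a⁻¹ * x * a) * d * (a⁻¹ * x * a)⁻¹ * d⁻¹) * a⁻¹ *
              ((a⁻¹ * x * a) * d * (a⁻¹ * x * a)⁻¹ * d⁻¹)⁻¹ ∈ Ls (i + n + 2) :=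
            hcm (i + n + 1) a _ hm'
          have h3 : (a⁻¹ * x * a * x⁻¹) * (x * d * x⁻¹ * d⁻¹) * (a⁻¹ * x * a * x⁻¹)⁻¹ *
              (x * d * x⁻¹ * d⁻¹)⁻¹ ∈ Ls (i + n + 2) :=
            hcm (i + n + 1) _ _ hm
          have key : x * (a * d * a⁻¹ * d⁻¹) * x⁻¹ * (a * d * a⁻¹ * d⁻¹)⁻¹ =
              (a * ((a⁻¹ * x * a) * d * (a⁻¹ * x * a)⁻¹ * d⁻¹) * a⁻¹ *
                ((a⁻¹ * x * a) * d * (a⁻¹ * x * a)⁻¹ * d⁻¹)⁻¹) *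
              ((a⁻¹ * x * a * x⁻¹) * (x * d * x⁻¹ * d⁻¹) * (a⁻¹ * x * a * x⁻¹)⁻¹ *
                (x * d * x⁻¹ * d⁻¹)⁻¹) *
              ((x * d * x⁻¹ * d⁻¹) * ((a⁻¹ * x * a * x⁻¹) * d * (a⁻¹ * x * a * x⁻¹)⁻¹ * d⁻¹) *
                (x * d * x⁻¹ * d⁻¹)⁻¹) *
              ((x * d * x⁻¹ * d⁻¹) * ((a * d * a⁻¹ * d⁻¹) * (x * d * x⁻¹ * d⁻¹)⁻¹ *
                (a * d * a⁻¹ * d⁻¹)⁻¹ * (x * d * x⁻¹ * d⁻¹)) * (x * d * x⁻¹ * d⁻¹)⁻¹) := by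
            group
          rw [show i + (n + 1) + 1 = i + n + 2 by omega, key]
          refine mul_mem (mul_mem (mul_mem h2 h3) ?_) ?_
          · exact (hnorm _).conj_mem _ hkd _
          · have h1' : (a * d * a⁻¹ * d⁻¹) * (x * d * x⁻¹ * d⁻¹)⁻¹ *
                (a * d * a⁻¹ * d⁻¹)⁻¹ * (x * d * x⁻¹ * d⁻¹) ∈ Ls (i + n + 2) := by
              have := h1; rwa [inv_inv] at this
            exact (hnorm _).conj_mem _ h1' _
  refine ⟨hnorm, hlam, fun i j x hx y hy => hcomm j i x hx y hy⟩
end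

section
/- A skew brace A is L-nilpotent (L^{k+1}(A) = 1 for some k) if and only if A is left nilpotent (the chain A¹ = A, A^{i+1} = ⟨a*b : a ∈ A, b ∈ A^i⟩ reaches 1) and the group (A,·) is nilpotent. -/
namespace SBAux

open Subgroup

variable {A : Type*} [Group A] (B : SkewBrace A)

theorem circ_one (a : A) : B.circ a 1 = a := by
  have h := B.compat a 1 1
  rw [mul_one] at h
  have h3 : a⁻¹ * B.circ a 1 = 1 := by
    have h2 : B.circ a 1 * (a⁻¹ * B.circ a 1) = B.circ a 1 * 1 := by
      rw [mul_one, ← mul_assoc, ← h]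
    exact mul_left_cancel h2
  exact (inv_mul_eq_one.mp h3).symm

theorem lam_one (a : A) : B.lam a 1 = 1 := by
  simp [SkewBrace.lam, circ_one]

theorem lam_mul (a b c : A) : B.lam a (b * c) = B.lam a b * B.lam a c := by
  simp only [SkewBrace.lam, B.compat]
  group

def lamHom (a : A) : A →* A :=
  { toFun := B.lam a, map_one' := lam_one B a, map_mul' := lam_mul B a }

theorem lam_inv (a x : A) : B.lam a x⁻¹ = (B.lam a x)⁻¹ := map_inv (lamHom B a) x

theorem lam_circ (a b c : A) : B.lam (B.circ a b) c = B.lam a (B.lam b c) := by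
  have h : B.lam a (B.lam b c) = (B.lam a b)⁻¹ * B.lam a (B.circ b c) := by
    rw [show B.lam b c = b⁻¹ * B.circ b c from rfl, lam_mul, lam_inv]
  rw [h]
  simp only [SkewBrace.lam, B.circ_assoc]
  group

theorem star_eq (a b : A) : a⁻¹ * B.circ a b * b⁻¹ = B.lam a b * b⁻¹ := rfl

def conjHom (g : A) : A →* A :=
  { toFun := fun x => g * x * g⁻¹,
    map_one' := by group,
    map_mul' := by intro x y; group }

/-- generating set for the star (as) series -/
def sset (H : Subgroup A) : Set A :=
  {x : A | ∃ a b : A, b ∈ H ∧ x = a⁻¹ * B.circ a b * b⁻¹}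

/-- generating set for commutator series -/
def cset (H : Subgroup A) : Set A :=
  {x : A | ∃ a b : A, b ∈ H ∧ x = a * b * a⁻¹ * b⁻¹}

/-- generating set for the P-series -/
def ccset (K H : Subgroup A) : Set A :=
  {x : A | ∃ u v : A, u ∈ K ∧ v ∈ H ∧ x = u * v * u⁻¹ * v⁻¹}

variable (as : ℕ → Subgroup A)

theorem lam_mem_as (ha0 : as 0 = ⊤)
    (has : ∀ i, as (i + 1) = closure (sset B (as i))) :
    ∀ p a x, x ∈ as p → B.lam a x ∈ as p := by
  intro p a
  cases p with
  | zero => intro x _; rw [ha0]; trivial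
  | succ p =>
    intro x hx
    rw [has p] at hx ⊢
    have hle : closure (sset B (as p)) ≤ comap (lamHom B a) (closure (sset B (as p))) := by
      rw [closure_le]
      rintro y ⟨a', b, hb, rfl⟩
      simp only [SetLike.mem_coe, mem_comap]
      have heq : (lamHom B a) (a'⁻¹ * B.circ a' b * b⁻¹)
          = (B.lam (B.circ a a') b * b⁻¹) * (B.lam a b * b⁻¹)⁻¹ := by
        show B.lam a (a'⁻¹ * B.circ a' b * b⁻¹) = _
        rw [star_eq, lam_mul, lam_inv, ← lam_circ]
        group
      rw [heq]
      exact mul_mem (subset_closure ⟨B.circ a a', b, hb, rfl⟩)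
        (inv_mem (subset_closure ⟨a, b, hb, rfl⟩))
    exact hle hx

theorem star_mem_as (has : ∀ i, as (i + 1) = closure (sset B (as i)))
    {p : ℕ} (a : A) {x : A} (hx : x ∈ as p) :
    B.lam a x * x⁻¹ ∈ as (p + 1) := by
  rw [has p]
  exact subset_closure ⟨a, x, hx, rfl⟩

theorem as_succ_le (ha0 : as 0 = ⊤)
    (has : ∀ i, as (i + 1) = closure (sset B (as i))) (p : ℕ) :
    as (p + 1) ≤ as p := by
  rw [has p, closure_le]
  rintro x ⟨a, b, hb, rfl⟩
  simp only [SetLike.mem_coe]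
  rw [star_eq]
  exact mul_mem (lam_mem_as B as ha0 has p a b hb) (inv_mem hb)

theorem as_le (ha0 : as 0 = ⊤)
    (has : ∀ i, as (i + 1) = closure (sset B (as i)))
    {p q : ℕ} (h : p ≤ q) : as q ≤ as p := by
  induction q, h using Nat.le_induction with
  | base => exact le_rfl
  | succ q hq ih => exact le_trans (as_succ_le B as ha0 has q) ih


def Pser : List ℕ → Subgroup A
  | [] => ⊥
  | [p] => as p
  | p :: q :: L => closure (ccset (as p) (Pser (q :: L)))

theorem Pser_cons (p : ℕ) {L : List ℕ} (hL : L ≠ []) :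
    Pser as (p :: L) = closure (ccset (as p) (Pser as L)) := by
  cases L with
  | nil => exact absurd rfl hL
  | cons q L => rfl

def degL (L : List ℕ) : ℕ := L.sum + L.length

def Dser (k : ℕ) : Subgroup A :=
  ⨆ (L : List ℕ) (_ : L ≠ [] ∧ k ≤ degL L), Pser as L

theorem P_le_D {L : List ℕ} (hL : L ≠ []) {k : ℕ} (hk : k ≤ degL L) :
    Pser as L ≤ Dser as k :=
  le_iSup_of_le L (le_iSup_of_le ⟨hL, hk⟩ le_rfl)

theorem D_antitone {j k : ℕ} (h : j ≤ k) : Dser as k ≤ Dser as j :=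
  iSup_le fun L => iSup_le fun hLk => P_le_D as hLk.1 (le_trans h hLk.2)

theorem conj_P (ha0 : as 0 = ⊤) {L : List ℕ} (hL : L ≠ []) {x : A} (hx : x ∈ Pser as L)
    (g : A) : g * x * g⁻¹ ∈ Dser as (degL L) := by
  have h1 : g * x * g⁻¹ * x⁻¹ ∈ Pser as (0 :: L) := by
    rw [Pser_cons as 0 hL]
    exact subset_closure ⟨g, x, by rw [ha0]; trivial, hx, rfl⟩
  have h2 : g * x * g⁻¹ * x⁻¹ ∈ Dser as (degL L) := by
    refine P_le_D as (by simp) ?_ h1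
    simp [degL]
  have h3 : x ∈ Dser as (degL L) := P_le_D as hL le_rfl hx
  have heq : g * x * g⁻¹ = (g * x * g⁻¹ * x⁻¹) * x := by group
  rw [heq]; exact mul_mem h2 h3

theorem D_normal (ha0 : as 0 = ⊤) (k : ℕ) : (Dser as k).Normal := by
  constructor
  intro x hx g
  have hle : Dser as k ≤ comap (conjHom g) (Dser as k) := by
    apply iSup_le; intro L; apply iSup_le; rintro ⟨hL, hk⟩
    intro y hy
    simp only [SetLike.mem_coe, mem_comap]
    exact D_antitone as hk (conj_P as ha0 hL hy g)
  exact hle hx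

def commSub (g : A) (N : Subgroup A) (hN : N.Normal) : Subgroup A where
  carrier := {x : A | g * x * g⁻¹ * x⁻¹ ∈ N}
  one_mem' := by simpa using one_mem N
  mul_mem' := by
    intro x y hx hy
    simp only [Set.mem_setOf_eq] at *
    have heq : g * (x * y) * g⁻¹ * (x * y)⁻¹
        = (g * x * g⁻¹ * x⁻¹) * (x * (g * y * g⁻¹ * y⁻¹) * x⁻¹) := by group
    rw [heq]; exact mul_mem hx (hN.conj_mem _ hy x)
  inv_mem' := by
    intro x hx
    simp only [Set.mem_setOf_eq] at *
    have heq : g * x⁻¹ * g⁻¹ * x⁻¹⁻¹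
        = x⁻¹ * (g * x * g⁻¹ * x⁻¹)⁻¹ * x⁻¹⁻¹ := by group
    rw [heq]; exact hN.conj_mem _ (inv_mem hx) x⁻¹

theorem comm_KP_D (ha0 : as 0 = ⊤) {r : ℕ} {u : A} (hu : u ∈ as r) {j : ℕ} {w : A}
    (hw : w ∈ Dser as j) : u * w * u⁻¹ * w⁻¹ ∈ Dser as (r + 1 + j) := by
  have hN := D_normal as ha0 (r + 1 + j)
  have hle : Dser as j ≤ commSub u (Dser as (r + 1 + j)) hN := by
    apply iSup_le; intro L; apply iSup_le; rintro ⟨hL, hj⟩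
    intro x hx
    show u * x * u⁻¹ * x⁻¹ ∈ Dser as (r + 1 + j)
    have hmem : u * x * u⁻¹ * x⁻¹ ∈ Pser as (r :: L) := by
      rw [Pser_cons as r hL]
      exact subset_closure ⟨u, x, hu, hx, rfl⟩
    refine P_le_D as (by simp) ?_ hmem
    simp only [degL, List.sum_cons, List.length_cons] at hj ⊢
    omega
  exact hle hw


def starSub (a : A) (N : Subgroup A) (hN : N.Normal) : Subgroup A where
  carrier := {x : A | B.lam a x * x⁻¹ ∈ N}
  one_mem' := by simpa [lam_one] using one_mem N
  mul_mem' := by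
    intro x y hx hy
    simp only [Set.mem_setOf_eq] at *
    have heq : B.lam a (x * y) * (x * y)⁻¹
        = (B.lam a x * x⁻¹) * (x * (B.lam a y * y⁻¹) * x⁻¹) := by
      rw [lam_mul]; group
    rw [heq]; exact mul_mem hx (hN.conj_mem _ hy x)
  inv_mem' := by
    intro x hx
    simp only [Set.mem_setOf_eq] at *
    have heq : B.lam a x⁻¹ * x⁻¹⁻¹
        = (B.lam a x)⁻¹ * (B.lam a x * x⁻¹)⁻¹ * (B.lam a x)⁻¹⁻¹ := by
      rw [lam_inv]; group
    rw [heq]; exact hN.conj_mem _ (inv_mem hx) (B.lam a x)⁻¹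

theorem star_P (ha0 : as 0 = ⊤)
    (has : ∀ i, as (i + 1) = closure (sset B (as i))) :
    ∀ (L : List ℕ), L ≠ [] → ∀ a x, x ∈ Pser as L →
      B.lam a x * x⁻¹ ∈ Dser as (degL L + 1) := by
  intro L
  induction L with
  | nil => intro h; exact absurd rfl h
  | cons p L ih =>
    intro _ a x hx
    cases L with
    | nil =>
      have h1 : B.lam a x * x⁻¹ ∈ as (p + 1) := star_mem_as B as has a hx
      have h2 : B.lam a x * x⁻¹ ∈ Pser as [p + 1] := h1
      refine P_le_D as (by simp) ?_ h2
      simp [degL]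
    | cons q L' =>
      have hMne : (q :: L') ≠ [] := by simp
      have hd : degL (p :: q :: L') = p + 1 + degL (q :: L') := by
        simp only [degL, List.sum_cons, List.length_cons]; omega
      have hN := D_normal as ha0 (degL (p :: q :: L') + 1)
      have hle : Pser as (p :: q :: L')
          ≤ starSub B a (Dser as (degL (p :: q :: L') + 1)) hN := by
        rw [Pser_cons as p hMne, closure_le]
        rintro s ⟨u, v, hu, hv, rfl⟩
        show B.lam a (u * v * u⁻¹ * v⁻¹) * (u * v * u⁻¹ * v⁻¹)⁻¹
            ∈ Dser as (degL (p :: q :: L') + 1)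
        set d := degL (p :: q :: L') with hddef
        set U := B.lam a u with hU
        set V := B.lam a v with hV
        have hu' : U * u⁻¹ ∈ as (p + 1) := star_mem_as B as has a hu
        have hv' : V * v⁻¹ ∈ Dser as (degL (q :: L') + 1) := ih hMne a v hv
        -- A1 = u' * [u, v'] * u'⁻¹
        have hm1 : u * (V * v⁻¹) * u⁻¹ * (V * v⁻¹)⁻¹
            ∈ Dser as (p + 1 + (degL (q :: L') + 1)) := comm_KP_D as ha0 hu hv'
        have hA1 : (U * u⁻¹) * (u * (V * v⁻¹) * u⁻¹ * (V * v⁻¹)⁻¹) * (U * u⁻¹)⁻¹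
            ∈ Dser as (d + 1) := by
          refine hN.conj_mem _ (D_antitone as (by omega) hm1) _
        -- c ∈ D d
        have hc : u * v * u⁻¹ * v⁻¹ ∈ Pser as (p :: q :: L') := by
          rw [Pser_cons as p hMne]
          exact subset_closure ⟨u, v, hu, hv, rfl⟩
        have hcD : u * v * u⁻¹ * v⁻¹ ∈ Dser as d := P_le_D as (by simp) le_rfl hc
        -- T2 = [u'v', c]
        have hT2 : ((U * u⁻¹) * (V * v⁻¹)) * (u * v * u⁻¹ * v⁻¹)
              * ((U * u⁻¹) * (V * v⁻¹))⁻¹ * (u * v * u⁻¹ * v⁻¹)⁻¹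
            ∈ Dser as (d + 1) := by
          have h0 : (U * u⁻¹) * (V * v⁻¹) ∈ as 0 := by rw [ha0]; trivial
          have := comm_KP_D as ha0 h0 hcD
          exact D_antitone as (by omega) this
        -- X1 = [u', v']
        have hX1 : (U * u⁻¹) * (V * v⁻¹) * (U * u⁻¹)⁻¹ * (V * v⁻¹)⁻¹
            ∈ Dser as (d + 1) := by
          have := comm_KP_D as ha0 hu' hv'
          exact D_antitone as (by omega) this
        -- X2 = [u', v]
        have hvD : v ∈ Dser as (degL (q :: L')) := P_le_D as hMne le_rfl hv
        have hX2 : (U * u⁻¹) * v * (U * u⁻¹)⁻¹ * v⁻¹ ∈ Dser as (d + 1) := by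
          have := comm_KP_D as ha0 hu' hvD
          exact D_antitone as (by omega) this
        -- X = X1 * (v' X2 v'⁻¹)
        have hX : ((U * u⁻¹) * (V * v⁻¹) * (U * u⁻¹)⁻¹ * (V * v⁻¹)⁻¹)
              * ((V * v⁻¹) * ((U * u⁻¹) * v * (U * u⁻¹)⁻¹ * v⁻¹) * (V * v⁻¹)⁻¹)
            ∈ Dser as (d + 1) :=
          mul_mem hX1 (hN.conj_mem _ hX2 _)
        -- T3 = c X c⁻¹
        have hT3 : (u * v * u⁻¹ * v⁻¹)
              * (((U * u⁻¹) * (V * v⁻¹) * (U * u⁻¹)⁻¹ * (V * v⁻¹)⁻¹)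
              * ((V * v⁻¹) * ((U * u⁻¹) * v * (U * u⁻¹)⁻¹ * v⁻¹) * (V * v⁻¹)⁻¹))
              * (u * v * u⁻¹ * v⁻¹)⁻¹
            ∈ Dser as (d + 1) := hN.conj_mem _ hX _
        have hlam : B.lam a (u * v * u⁻¹ * v⁻¹) = U * V * U⁻¹ * V⁻¹ := by
          rw [lam_mul, lam_mul, lam_mul, lam_inv, lam_inv]
        rw [hlam]
        have key : U * V * U⁻¹ * V⁻¹ * (u * v * u⁻¹ * v⁻¹)⁻¹
            = ((U * u⁻¹) * (u * (V * v⁻¹) * u⁻¹ * (V * v⁻¹)⁻¹) * (U * u⁻¹)⁻¹)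
            * (((U * u⁻¹) * (V * v⁻¹)) * (u * v * u⁻¹ * v⁻¹)
                * ((U * u⁻¹) * (V * v⁻¹))⁻¹ * (u * v * u⁻¹ * v⁻¹)⁻¹)
            * ((u * v * u⁻¹ * v⁻¹)
                * (((U * u⁻¹) * (V * v⁻¹) * (U * u⁻¹)⁻¹ * (V * v⁻¹)⁻¹)
                  * ((V * v⁻¹) * ((U * u⁻¹) * v * (U * u⁻¹)⁻¹ * v⁻¹) * (V * v⁻¹)⁻¹))
                * (u * v * u⁻¹ * v⁻¹)⁻¹) := by
          group
        rw [key]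
        exact mul_mem (mul_mem hA1 hT2) hT3
      exact hle hx

theorem star_mem_D (ha0 : as 0 = ⊤)
    (has : ∀ i, as (i + 1) = closure (sset B (as i)))
    {k : ℕ} {x : A} (hx : x ∈ Dser as k) (a : A) :
    B.lam a x * x⁻¹ ∈ Dser as (k + 1) := by
  have hN := D_normal as ha0 (k + 1)
  have hle : Dser as k ≤ starSub B a (Dser as (k + 1)) hN := by
    apply iSup_le; intro L; apply iSup_le; rintro ⟨hL, hk⟩
    intro y hy
    show B.lam a y * y⁻¹ ∈ Dser as (k + 1)
    exact D_antitone as (by omega) (star_P B as ha0 has L hL a y hy)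
  exact hle hx


variable (g : ℕ → Subgroup A)

theorem g_normal (hg0 : g 0 = ⊤) (hgs : ∀ i, g (i + 1) = closure (cset (g i))) :
    ∀ i, (g i).Normal := by
  intro i
  induction i with
  | zero => rw [hg0]; infer_instance
  | succ i ih =>
    constructor
    intro x hx gg
    rw [hgs i] at hx ⊢
    have hle : closure (cset (g i)) ≤ comap (conjHom gg) (closure (cset (g i))) := by
      rw [closure_le]
      rintro y ⟨a, b, hb, rfl⟩
      simp only [SetLike.mem_coe, mem_comap]
      have heq : (conjHom gg) (a * b * a⁻¹ * b⁻¹)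
          = (gg * a * gg⁻¹) * (gg * b * gg⁻¹) * (gg * a * gg⁻¹)⁻¹ * (gg * b * gg⁻¹)⁻¹ := by
        show gg * (a * b * a⁻¹ * b⁻¹) * gg⁻¹ = _
        group
      rw [heq]
      exact subset_closure ⟨gg * a * gg⁻¹, gg * b * gg⁻¹, ih.conj_mem b hb gg, rfl⟩
    exact hle hx

theorem g_succ_le (hg0 : g 0 = ⊤) (hgs : ∀ i, g (i + 1) = closure (cset (g i)))
    (i : ℕ) : g (i + 1) ≤ g i := by
  rw [hgs i, closure_le]
  rintro x ⟨a, b, hb, rfl⟩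
  simp only [SetLike.mem_coe]
  exact mul_mem ((g_normal g hg0 hgs i).conj_mem b hb a) (inv_mem hb)

theorem g_le (hg0 : g 0 = ⊤) (hgs : ∀ i, g (i + 1) = closure (cset (g i)))
    {i j : ℕ} (h : i ≤ j) : g j ≤ g i := by
  induction j, h using Nat.le_induction with
  | base => exact le_rfl
  | succ j hj ih => exact le_trans (g_succ_le g hg0 hgs j) ih

theorem P_le_g (hg0 : g 0 = ⊤) (hgs : ∀ i, g (i + 1) = closure (cset (g i))) :
    ∀ (L : List ℕ) (p : ℕ), Pser as (p :: L) ≤ g L.length := by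
  intro L
  induction L with
  | nil =>
    intro p
    show Pser as [p] ≤ g 0
    rw [hg0]; exact le_top
  | cons q L' ih =>
    intro p
    show Pser as (p :: q :: L') ≤ g (L'.length + 1)
    rw [hgs]
    rw [show Pser as (p :: q :: L') = closure (ccset (as p) (Pser as (q :: L'))) from rfl,
      closure_le]
    rintro x ⟨u, v, _, hv, rfl⟩
    exact subset_closure ⟨u, v, ih q hv, rfl⟩

theorem P_bot {m : ℕ} (ham : as m = ⊥)
    (asmono : ∀ {p q : ℕ}, p ≤ q → as q ≤ as p) :
    ∀ L : List ℕ, (∃ p ∈ L, m ≤ p) → Pser as L = ⊥ := by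
  intro L
  induction L with
  | nil => rintro ⟨p, hp, _⟩; exact absurd hp List.not_mem_nil
  | cons p L ih =>
    rintro ⟨r, hr, hmr⟩
    cases L with
    | nil =>
      have hrp : r = p := by simpa using hr
      show as p = ⊥
      exact le_bot_iff.mp (le_trans (asmono (hrp ▸ hmr)) (le_of_eq ham))
    | cons q L' =>
      apply le_bot_iff.mp
      rcases List.mem_cons.mp hr with h | h
      · have hbot : as p = ⊥ := le_bot_iff.mp (le_trans (asmono (h ▸ hmr)) (le_of_eq ham))
        rw [show Pser as (p :: q :: L') = closure (ccset (as p) (Pser as (q :: L'))) from rfl,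
          closure_le]
        rintro x ⟨u, v, hu, hv, rfl⟩
        rw [hbot] at hu
        have : u = 1 := by simpa using hu
        subst this
        simp
      · have hbot : Pser as (q :: L') = ⊥ := ih ⟨r, h, hmr⟩
        rw [show Pser as (p :: q :: L') = closure (ccset (as p) (Pser as (q :: L'))) from rfl,
          closure_le]
        rintro x ⟨u, v, hu, hv, rfl⟩
        rw [hbot] at hv
        have : v = 1 := by simpa using hv
        subst this
        simp

theorem D_bot (ha0 : as 0 = ⊤)
    (has : ∀ i, as (i + 1) = closure (sset B (as i)))
    (hg0 : g 0 = ⊤) (hgs : ∀ i, g (i + 1) = closure (cset (g i)))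
    {m n : ℕ} (hm : as m = ⊥) (hn : g n = ⊥) :
    Dser as (n * m + n + 1) = ⊥ := by
  apply le_antisymm _ bot_le
  apply iSup_le; intro L; apply iSup_le; rintro ⟨hL, hdeg⟩
  obtain ⟨p, L', rfl⟩ := List.exists_cons_of_ne_nil hL
  by_cases hlen : n ≤ L'.length
  · have h1 : Pser as (p :: L') ≤ g L'.length := P_le_g as g hg0 hgs L' p
    have h2 : g L'.length ≤ g n := g_le g hg0 hgs hlen
    rw [hn] at h2
    exact le_trans h1 h2
  · have hex : ∃ r ∈ p :: L', m ≤ r := by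
      by_contra hcon
      push_neg at hcon
      have hm1 : 1 ≤ m := by have := hcon p (by simp); omega
      obtain ⟨m', rfl⟩ : ∃ m', m = m' + 1 := ⟨m - 1, by omega⟩
      have hsum : (p :: L').sum ≤ (p :: L').length * m' := by
        apply List.sum_le_card_nsmul
        intro x hx
        have := hcon x hx; omega
      have hlen2 : (p :: L').length ≤ n := by
        simp only [List.length_cons] at *
        omega
      have hmul : (p :: L').length * m' ≤ n * m' := Nat.mul_le_mul_right m' hlen2
      have hdeg' : n * (m' + 1) + n + 1 ≤ (p :: L').sum + (p :: L').length := hdeg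
      have hrw : n * (m' + 1) = n * m' + n := by ring
      omega
    obtain ⟨r, hrL, hmr⟩ := hex
    have : Pser as (p :: L') = ⊥ :=
      P_bot as hm (fun h => as_le B as ha0 has h) (p :: L') ⟨r, hrL, hmr⟩
    exact le_of_eq this

end SBAux

/-- A skew brace `A` is L-nilpotent (the series
`L^{i+1}(A) = ⟨a*b, [a,b] : b ∈ L^i(A)⟩` reaches `1`) iff it is left
nilpotent (the series `A^{i+1} = ⟨a*b : b ∈ A^i⟩` reaches `1`) and the group
`(A,·)` is nilpotent (its lower central series reaches `1`). -/
theorem stmt16 {A : Type*} [Group A] (B : SkewBrace A)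
    (Ls : ℕ → Subgroup A) (hL0 : Ls 0 = ⊤)
    (hLs : ∀ i, Ls (i + 1) = Subgroup.closure
      {x : A | ∃ a b : A, b ∈ Ls i ∧
        (x = a⁻¹ * B.circ a b * b⁻¹ ∨ x = a * b * a⁻¹ * b⁻¹)})
    (as : ℕ → Subgroup A) (ha0 : as 0 = ⊤)
    (has : ∀ i, as (i + 1) = Subgroup.closure
      {x : A | ∃ a b : A, b ∈ as i ∧ x = a⁻¹ * B.circ a b * b⁻¹})
    (g : ℕ → Subgroup A) (hg0 : g 0 = ⊤)
    (hgs : ∀ i, g (i + 1) = Subgroup.closure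
      {x : A | ∃ a b : A, b ∈ g i ∧ x = a * b * a⁻¹ * b⁻¹}) :
    (∃ k, Ls k = ⊥) ↔ (∃ k, as k = ⊥) ∧ (∃ k, g k = ⊥) := by
  have has' : ∀ i, as (i + 1) = Subgroup.closure (SBAux.sset B (as i)) := has
  have hgs' : ∀ i, g (i + 1) = Subgroup.closure (SBAux.cset (g i)) := hgs
  constructor
  · rintro ⟨k, hk⟩
    have hasle : ∀ i, as i ≤ Ls i := by
      intro i
      induction i with
      | zero => rw [ha0, hL0]
      | succ i ih =>
        rw [has i, hLs i]
        apply Subgroup.closure_mono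
        rintro x ⟨a, b, hb, hx⟩
        exact ⟨a, b, ih hb, Or.inl hx⟩
    have hgle : ∀ i, g i ≤ Ls i := by
      intro i
      induction i with
      | zero => rw [hg0, hL0]
      | succ i ih =>
        rw [hgs i, hLs i]
        apply Subgroup.closure_mono
        rintro x ⟨a, b, hb, hx⟩
        exact ⟨a, b, ih hb, Or.inr hx⟩
    exact ⟨⟨k, le_antisymm (hk ▸ hasle k) bot_le⟩, ⟨k, le_antisymm (hk ▸ hgle k) bot_le⟩⟩
  · rintro ⟨⟨m, hm⟩, n, hn⟩
    refine ⟨n * m + n, le_antisymm ?_ bot_le⟩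
    have main : ∀ k, Ls k ≤ SBAux.Dser as (k + 1) := by
      intro k
      induction k with
      | zero =>
        rw [hL0]
        intro x _
        have hx0 : x ∈ SBAux.Pser as [0] := by
          show x ∈ as 0
          rw [ha0]; trivial
        exact SBAux.P_le_D as (by simp) (by simp [SBAux.degL]) hx0
      | succ k ih =>
        rw [hLs k, Subgroup.closure_le]
        rintro x ⟨a, b, hb, hx | hx⟩
        · subst hx
          simp only [SetLike.mem_coe]
          rw [SBAux.star_eq]
          exact SBAux.star_mem_D B as ha0 has' (ih hb) a
        · subst hx
          simp only [SetLike.mem_coe]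
          have hcomm := SBAux.comm_KP_D as ha0 (r := 0) (u := a)
            (by rw [ha0]; trivial) (ih hb)
          exact SBAux.D_antitone as (by omega) hcomm
    have hD : SBAux.Dser as (n * m + n + 1) = ⊥ :=
      SBAux.D_bot B as g ha0 has' hg0 hgs' hm hn
    exact le_trans (main (n * m + n)) (le_of_eq hD)
end

section
/- Let A be an L-nilpotent skew brace of class k. Then the group (A,∘) is nilpotent of class at most k, and the k-th term of the lower central series of (A,∘) is contained in the annihilator Ann(A) = {a | ∀b, b∘a = a∘b = a·b = b·a}. In particular, if A is a left nilpotent skew brace with (A,·) nilpotent, then (A,∘) is nilpotent. -/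
/-- The commutator `a ∘ b ∘ a°⁻¹ ∘ b°⁻¹` in the group `(A,∘)`. -/
def SkewBrace.ccomm {A : Type*} [Group A] (B : SkewBrace A) (a b : A) : A :=
  B.circ (B.circ (B.circ a b) (B.cinv a)) (B.cinv b)

/-- A subset closed under the group operations of `(A,∘)`. -/
def SkewBrace.IsCircSubgroup {A : Type*} [Group A] (B : SkewBrace A)
    (S : Set A) : Prop :=
  B.e ∈ S ∧ (∀ x ∈ S, ∀ y ∈ S, B.circ x y ∈ S) ∧ (∀ x ∈ S, B.cinv x ∈ S)

namespace SkewBrace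

variable {A : Type*} [Group A] (B : SkewBrace A)

lemma circ_one_s17 (a : A) : B.circ a 1 = a := by
  have h := B.compat a 1 1
  rw [mul_one, mul_assoc] at h
  nth_rewrite 1 [← mul_one (B.circ a 1)] at h
  have h2 := mul_left_cancel h
  have h3 := eq_inv_mul_iff_mul_eq.mp h2
  rw [mul_one] at h3
  exact h3.symm

lemma e_eq_one : B.e = 1 := by
  have h1 := B.circ_one_s17 B.e
  have h2 := B.e_circ 1
  rw [h1] at h2
  exact h2

lemma one_circ (a : A) : B.circ 1 a = a := by
  rw [← B.e_eq_one]; exact B.e_circ a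

lemma circ_eq_lam (a b : A) : B.circ a b = a * B.lam a b := by
  unfold lam; group

lemma lam_mul_s17 (a b c : A) : B.lam a (b * c) = B.lam a b * B.lam a c := by
  unfold lam; rw [B.compat]; group

lemma circ_inv (a b : A) : B.circ a b⁻¹ = a * (B.circ a b)⁻¹ * a := by
  have h := B.compat a b b⁻¹
  rw [mul_inv_cancel, B.circ_one_s17] at h
  apply mul_left_cancel (a := B.circ a b * a⁻¹)
  calc B.circ a b * a⁻¹ * B.circ a b⁻¹ = a := h.symm
    _ = B.circ a b * a⁻¹ * (a * (B.circ a b)⁻¹ * a) := by group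

lemma lam_circ_s17 (a b c : A) : B.lam (B.circ a b) c = B.lam a (B.lam b c) := by
  unfold lam
  rw [B.compat a b⁻¹ (B.circ b c), B.circ_inv, ← B.circ_assoc]
  group

lemma lam_one_left (c : A) : B.lam 1 c = c := by
  unfold lam; rw [B.one_circ]; group

lemma circ_cinv_one (a : A) : B.circ a (B.cinv a) = 1 := by
  rw [B.circ_cinv, B.e_eq_one]

lemma cinv_circ_one (a : A) : B.circ (B.cinv a) a = 1 := by
  rw [B.cinv_circ, B.e_eq_one]

lemma lam_lam_cinv (a c : A) : B.lam a (B.lam (B.cinv a) c) = c := by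
  rw [← B.lam_circ_s17, B.circ_cinv_one, B.lam_one_left]

lemma lam_cinv_lam (a c : A) : B.lam (B.cinv a) (B.lam a c) = c := by
  rw [← B.lam_circ_s17, B.cinv_circ_one, B.lam_one_left]

lemma lam_cinv_self (a : A) : B.lam a (B.cinv a) = a⁻¹ := by
  have h : a * B.lam a (B.cinv a) = 1 := by
    rw [← B.circ_eq_lam, B.circ_cinv_one]
  exact (inv_eq_of_mul_eq_one_right h).symm

lemma cinv_eq (a : A) : B.cinv a = B.lam (B.cinv a) a⁻¹ := by
  have h := B.lam_cinv_lam a (B.cinv a)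
  rw [B.lam_cinv_self] at h
  exact h.symm

lemma cinv_unique {x y : A} (h : B.circ x y = B.e) : B.cinv x = y := by
  have h2 : B.circ (B.cinv x) (B.circ x y) = y := by
    rw [← B.circ_assoc, B.cinv_circ, B.e_circ]
  rw [h, B.circ_e] at h2
  exact h2

lemma cinv_circ_eq (x y : A) : B.cinv (B.circ x y) = B.circ (B.cinv y) (B.cinv x) := by
  apply cinv_unique
  rw [B.circ_assoc, ← B.circ_assoc y, B.circ_cinv, B.e_circ, B.circ_cinv]

def st (a b : A) : A := B.lam a b * b⁻¹

lemma st_def' (a b : A) : B.st a b = a⁻¹ * B.circ a b * b⁻¹ := by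
  unfold st lam; group

lemma lam_eq_st (a b : A) : B.lam a b = B.st a b * b := by
  unfold st; group

lemma circ_eq_st (a b : A) : B.circ a b = a * B.st a b * b := by
  rw [B.circ_eq_lam, B.lam_eq_st]; group

lemma st_one_left (c : A) : B.st 1 c = 1 := by
  unfold st; rw [B.lam_one_left]; group

lemma st_mul (x u c : A) : B.st x (u * c) = B.st x u * (u * B.st x c * u⁻¹) := by
  unfold st; rw [B.lam_mul_s17]; group

lemma st_circ (x y c : A) : B.st (B.circ x y) c = B.st x (B.lam y c) * B.st y c := by
  unfold st; rw [B.lam_circ_s17]; group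

lemma st_cinv (x c : A) : B.st (B.cinv x) c = (B.st x (B.lam (B.cinv x) c))⁻¹ := by
  unfold st; rw [B.lam_lam_cinv]; group

lemma lam_ccomm (a b c : A) : B.lam (B.ccomm a b) c
    = B.lam a (B.lam b (B.lam (B.cinv a) (B.lam (B.cinv b) c))) := by
  unfold ccomm; rw [B.lam_circ_s17, B.lam_circ_s17, B.lam_circ_s17]


section Series

variable (Ls : ℕ → Subgroup A)

def SeriesHyp : Prop := ∀ i, Ls (i + 1) = Subgroup.closure
      {x : A | ∃ a b : A, b ∈ Ls i ∧
        (x = a⁻¹ * B.circ a b * b⁻¹ ∨ x = a * b * a⁻¹ * b⁻¹)}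

variable {B} {Ls}

lemma st_mem (hLs : B.SeriesHyp Ls) {i : ℕ} {b : A} (hb : b ∈ Ls i) (a : A) :
    B.st a b ∈ Ls (i + 1) := by
  rw [hLs i]
  exact Subgroup.subset_closure ⟨a, b, hb, Or.inl (B.st_def' a b)⟩

lemma commG_mem (hLs : B.SeriesHyp Ls) {i : ℕ} {b : A} (hb : b ∈ Ls i) (a : A) :
    a * b * a⁻¹ * b⁻¹ ∈ Ls (i + 1) := by
  rw [hLs i]
  exact Subgroup.subset_closure ⟨a, b, hb, Or.inr rfl⟩

lemma Ls_succ_le (hL0 : Ls 0 = ⊤) (hLs : B.SeriesHyp Ls) :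
    ∀ i, Ls (i + 1) ≤ Ls i := by
  intro i
  induction i with
  | zero => rw [hL0]; exact le_top
  | succ n ih =>
    rw [hLs (n + 1)]
    apply (Subgroup.closure_le _).mpr
    rintro x ⟨a, b, hb, h | h⟩
    · have hb' : b ∈ Ls n := ih hb
      show x ∈ Ls (n + 1)
      rw [h, ← B.st_def']
      exact st_mem hLs hb' a
    · have hb' : b ∈ Ls n := ih hb
      show x ∈ Ls (n + 1)
      rw [h]
      exact commG_mem hLs hb' a

lemma Ls_le (hL0 : Ls 0 = ⊤) (hLs : B.SeriesHyp Ls) :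
    ∀ {i j : ℕ}, i ≤ j → Ls j ≤ Ls i := by
  intro i j h
  induction h with
  | refl => exact le_rfl
  | step h ih => exact le_trans (Ls_succ_le hL0 hLs _) ih

lemma conj_mem (hL0 : Ls 0 = ⊤) (hLs : B.SeriesHyp Ls)
    {i : ℕ} (g : A) {x : A} (hx : x ∈ Ls i) : g * x * g⁻¹ ∈ Ls i := by
  cases i with
  | zero => rw [hL0]; exact Subgroup.mem_top _
  | succ n =>
    have hx' : x ∈ Ls n := Ls_succ_le hL0 hLs n hx
    have h1 := commG_mem hLs hx' g
    have h2 : g * x * g⁻¹ = g * x * g⁻¹ * x⁻¹ * x := by group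
    rw [h2]
    exact mul_mem h1 hx

lemma lam_mem (hL0 : Ls 0 = ⊤) (hLs : B.SeriesHyp Ls)
    {i : ℕ} (c : A) {x : A} (hx : x ∈ Ls i) : B.lam c x ∈ Ls i := by
  cases i with
  | zero => rw [hL0]; exact Subgroup.mem_top _
  | succ n =>
    have h1 := st_mem hLs hx c
    have h2 : B.st c x ∈ Ls (n + 1) := Ls_succ_le hL0 hLs (n + 1) h1
    rw [B.lam_eq_st]
    exact mul_mem h2 hx

end Series


section Core
variable {B : SkewBrace A} {Ls : ℕ → Subgroup A}

lemma lam_comm (hL0 : Ls 0 = ⊤) (hLs : B.SeriesHyp Ls) {i : ℕ} {b : A}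
    (hb2 : ∀ j, ∀ c : A, c ∈ Ls j → B.st b c ∈ Ls (i + j + 1))
    (a : A) {j : ℕ} {c : A} (hc : c ∈ Ls j) :
    B.lam a (B.lam b c) * (B.lam b (B.lam a c))⁻¹ ∈ Ls (i + j + 2) := by
  have hmM : B.st b c ∈ Ls (i + j + 1) := hb2 j c hc
  have huU : B.st a c ∈ Ls (j + 1) := st_mem hLs hc a
  have e1 : B.lam a (B.lam b c) = B.st a (B.st b c) * B.st b c * B.lam a c := by
    rw [B.lam_eq_st b c, B.lam_mul_s17 a (B.st b c) c, B.lam_eq_st a (B.st b c)]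
  have e2a : B.st b (B.lam a c) =
      B.st b (B.st a c) * (B.st a c * B.st b c * (B.st a c)⁻¹) := by
    rw [B.lam_eq_st a c, B.st_mul]
  have e2 : B.lam b (B.lam a c) =
      B.st b (B.st a c) * (B.st a c * B.st b c * (B.st a c)⁻¹) * B.lam a c := by
    rw [B.lam_eq_st b (B.lam a c), e2a]
  have hP : B.st a (B.st b c) ∈ Ls (i + j + 2) := st_mem hLs hmM a
  have hQ : B.st b (B.st a c) ∈ Ls (i + j + 2) := by
    have h := hb2 (j + 1) (B.st a c) huU
    have hidx : i + (j + 1) + 1 = i + j + 2 := by omega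
    rwa [hidx] at h
  have hC : B.st a c * B.st b c * (B.st a c)⁻¹ * (B.st b c)⁻¹ ∈ Ls (i + j + 2) :=
    commG_mem hLs hmM (B.st a c)
  have key : B.lam a (B.lam b c) * (B.lam b (B.lam a c))⁻¹
      = B.st a (B.st b c) *
        (B.st a c * B.st b c * (B.st a c)⁻¹ * (B.st b c)⁻¹)⁻¹ *
        (B.st b (B.st a c))⁻¹ := by
    rw [e1, e2]; group
  rw [key]
  exact mul_mem (mul_mem hP (inv_mem hC)) (inv_mem hQ)

lemma st_ccomm_mem (hL0 : Ls 0 = ⊤) (hLs : B.SeriesHyp Ls) {i : ℕ} {b : A}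
    (hb2 : ∀ j, ∀ c : A, c ∈ Ls j → B.st b c ∈ Ls (i + j + 1))
    (a : A) {j : ℕ} {c : A} (hc : c ∈ Ls j) :
    B.st (B.ccomm a b) c ∈ Ls (i + j + 2) := by
  have hc2m : B.lam (B.cinv a) (B.lam (B.cinv b) c) ∈ Ls j :=
    lam_mem hL0 hLs _ (lam_mem hL0 hLs _ hc)
  have hcomm := lam_comm hL0 hLs hb2 a hc2m
  have hback : B.lam b (B.lam a (B.lam (B.cinv a) (B.lam (B.cinv b) c))) = c := by
    rw [B.lam_lam_cinv a, B.lam_lam_cinv b]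
  have hg : B.st (B.ccomm a b) c =
      B.lam a (B.lam b (B.lam (B.cinv a) (B.lam (B.cinv b) c))) *
      (B.lam b (B.lam a (B.lam (B.cinv a) (B.lam (B.cinv b) c))))⁻¹ := by
    rw [hback]
    unfold st
    rw [B.lam_ccomm]
  rw [hg]
  exact hcomm

lemma ccomm_mem (hL0 : Ls 0 = ⊤) (hLs : B.SeriesHyp Ls) {i : ℕ} {b : A}
    (hb : b ∈ Ls i)
    (hb2 : ∀ j, ∀ c : A, c ∈ Ls j → B.st b c ∈ Ls (i + j + 1)) (a : A) :
    B.ccomm a b ∈ Ls (i + 1) := by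
  have hq : B.st (B.ccomm a b) (B.circ b a)⁻¹ ∈ Ls (i + 1) := by
    have h := st_ccomm_mem hL0 hLs hb2 a (j := 0) (c := (B.circ b a)⁻¹)
      (by rw [hL0]; exact Subgroup.mem_top _)
    have hidx : i + 0 + 2 = i + 1 + 1 := by omega
    rw [hidx] at h
    exact Ls_succ_le hL0 hLs (i + 1) h
  have h1 : B.ccomm a b = B.circ (B.circ a b) (B.cinv (B.circ b a)) := by
    unfold ccomm
    rw [B.circ_assoc, B.cinv_circ_eq b a]
  have hgu : B.ccomm a b = B.circ a b * (B.st (B.ccomm a b) (B.circ b a)⁻¹ * (B.circ b a)⁻¹) := by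
    calc B.ccomm a b = B.circ (B.circ a b) (B.cinv (B.circ b a)) := h1
      _ = B.circ a b * B.lam (B.circ a b) (B.cinv (B.circ b a)) := B.circ_eq_lam _ _
      _ = B.circ a b * B.lam (B.circ a b)
            (B.lam (B.cinv (B.circ b a)) (B.circ b a)⁻¹) := by rw [← B.cinv_eq]
      _ = B.circ a b * B.lam (B.circ (B.circ a b) (B.cinv (B.circ b a))) (B.circ b a)⁻¹ := by
            rw [B.lam_circ_s17 (B.circ a b) (B.cinv (B.circ b a)) (B.circ b a)⁻¹]
      _ = B.circ a b * B.lam (B.ccomm a b) (B.circ b a)⁻¹ := by rw [← h1]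
      _ = B.circ a b * (B.st (B.ccomm a b) (B.circ b a)⁻¹ * (B.circ b a)⁻¹) := by
            rw [B.lam_eq_st]
  obtain ⟨q, hqdef⟩ : ∃ q, q = B.st (B.ccomm a b) (B.circ b a)⁻¹ := ⟨_, rfl⟩
  rw [← hqdef] at hgu hq
  have hgu2 : B.ccomm a b = a * B.st a b * b * q * a⁻¹ * (B.st b a)⁻¹ * b⁻¹ := by
    rw [hgu, B.circ_eq_st a b, B.circ_eq_st b a]
    group
  have hp : B.st a b ∈ Ls (i + 1) := st_mem hLs hb a
  have hr : B.st b a ∈ Ls (i + 1) := by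
    have h := hb2 0 a (by rw [hL0]; exact Subgroup.mem_top _)
    have hidx : i + 0 + 1 = i + 1 := by omega
    rwa [hidx] at h
  have hfin : B.ccomm a b =
      a * B.st a b * a⁻¹ * (a * b * q * (a * b)⁻¹) *
      (a * b * a⁻¹ * (B.st b a)⁻¹ * (a * b * a⁻¹)⁻¹) * (a * b * a⁻¹ * b⁻¹) := by
    rw [hgu2]; group
  rw [hfin]
  refine mul_mem (mul_mem (mul_mem ?_ ?_) ?_) ?_
  · exact conj_mem hL0 hLs a hp
  · have := conj_mem hL0 hLs (a * b) hq
    have he : a * b * q * (a * b)⁻¹ = (a * b) * q * (a * b)⁻¹ := by group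
    rwa [he]
  · have := conj_mem hL0 hLs (a * b * a⁻¹) (inv_mem hr)
    have he : a * b * a⁻¹ * (B.st b a)⁻¹ * (a * b * a⁻¹)⁻¹
        = (a * b * a⁻¹) * (B.st b a)⁻¹ * (a * b * a⁻¹)⁻¹ := by group
    rwa [he]
  · exact commG_mem hLs hb a

end Core


end SkewBrace

open SkewBrace in
/-- Let `A` be an L-nilpotent skew brace of class `k` (the series
`L^{i+1}(A) = ⟨a*b, [a,b]_· : b ∈ L^i(A)⟩` satisfies `L^{k+1}(A) = 1`,
`L^k(A) ≠ 1`; here `Ls i = L^{i+1}(A)`). Then `(A,∘)` is nilpotent of class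
at most `k`: its lower central series `gc` (with `gc i = γ^{i+1}(A,∘)`, the
`∘`-subgroup generated by `∘`-commutators `[a,b]_∘` with `b ∈ gc (i-1)`)
satisfies `gc k = {1}`, and the `k`-th term `γ^k(A,∘) = gc (k-1)` is
contained in the annihilator `Ann(A)`. -/
theorem stmt17 {A : Type*} [Group A] (B : SkewBrace A)
    (Ls : ℕ → Subgroup A) (hL0 : Ls 0 = ⊤)
    (hLs : ∀ i, Ls (i + 1) = Subgroup.closure
      {x : A | ∃ a b : A, b ∈ Ls i ∧
        (x = a⁻¹ * B.circ a b * b⁻¹ ∨ x = a * b * a⁻¹ * b⁻¹)})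
    (k : ℕ) (hk : Ls k = ⊥) (hk' : 1 ≤ k → Ls (k - 1) ≠ ⊥)
    (gc : ℕ → Set A) (hgc0 : gc 0 = Set.univ)
    (hsub : ∀ i, B.IsCircSubgroup (gc (i + 1)))
    (hgen : ∀ i, ∀ a b : A, b ∈ gc i → B.ccomm a b ∈ gc (i + 1))
    (hmin : ∀ i, ∀ S : Set A, B.IsCircSubgroup S →
      (∀ a b : A, b ∈ gc i → B.ccomm a b ∈ S) → gc (i + 1) ⊆ S) :
    gc k = {B.e} ∧
    ∀ a ∈ gc (k - 1), ∀ b : A,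
      B.circ b a = b * a ∧ B.circ a b = a * b ∧ a * b = b * a := by
  have hLs' : B.SeriesHyp Ls := hLs
  have e1 : B.e = 1 := B.e_eq_one
  -- the key invariant, by induction on i
  have KP : ∀ i, ∀ x ∈ gc i,
      x ∈ Ls i ∧ ∀ j, ∀ c : A, c ∈ Ls j → B.st x c ∈ Ls (i + j + 1) := by
    intro i
    induction i with
    | zero =>
      intro x _
      refine ⟨by rw [hL0]; exact Subgroup.mem_top _, fun j c hc => ?_⟩
      have h := st_mem hLs' hc x
      have hidx : 0 + j + 1 = j + 1 := by omega
      rwa [hidx]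
    | succ n ih =>
      intro x hx
      set S : Set A := {y | y ∈ Ls (n + 1) ∧
        ∀ j, ∀ c : A, c ∈ Ls j → B.st y c ∈ Ls (n + 1 + j + 1)} with hSdef
      have hmemS : ∀ y : A, y ∈ S ↔ (y ∈ Ls (n + 1) ∧
          ∀ j, ∀ c : A, c ∈ Ls j → B.st y c ∈ Ls (n + 1 + j + 1)) := fun y => Iff.rfl
      have hsubS : B.IsCircSubgroup S := by
        refine ⟨?_, ?_, ?_⟩
        · rw [hmemS]
          constructor
          · rw [e1]; exact one_mem _
          · intro j c hc
            have h : B.st B.e c = 1 := by rw [e1]; exact B.st_one_left c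
            rw [h]; exact one_mem _
        · intro y hy z hz
          rw [hmemS] at hy hz ⊢
          obtain ⟨hy1, hy2⟩ := hy
          obtain ⟨hz1, hz2⟩ := hz
          constructor
          · rw [B.circ_eq_st]
            have hst : B.st y z ∈ Ls (n + 1) := by
              have h := hy2 (n + 1) z hz1
              exact Ls_le hL0 hLs' (by omega) h
            exact mul_mem (mul_mem hy1 hst) hz1
          · intro j c hc
            rw [B.st_circ]
            have hlc : B.lam z c ∈ Ls j := lam_mem hL0 hLs' z hc
            exact mul_mem (hy2 j _ hlc) (hz2 j c hc)
        · intro y hy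
          rw [hmemS] at hy ⊢
          obtain ⟨hy1, hy2⟩ := hy
          constructor
          · rw [B.cinv_eq]
            exact lam_mem hL0 hLs' _ (inv_mem hy1)
          · intro j c hc
            rw [B.st_cinv]
            exact inv_mem (hy2 j _ (lam_mem hL0 hLs' _ hc))
      have hgenS : ∀ a b : A, b ∈ gc n → B.ccomm a b ∈ S := by
        intro a b hb
        obtain ⟨hb1, hb2⟩ := ih b hb
        rw [hmemS]
        constructor
        · exact ccomm_mem hL0 hLs' hb1 hb2 a
        · intro j c hc
          have h := st_ccomm_mem hL0 hLs' hb2 a hc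
          have hidx : n + j + 2 = n + 1 + j + 1 := by omega
          rwa [hidx] at h
      exact (hmin n S hsubS hgenS) hx
  constructor
  · cases k with
    | zero =>
      have htriv : ∀ x : A, x = 1 := by
        intro x
        have hx : x ∈ Ls 0 := by rw [hL0]; exact Subgroup.mem_top _
        rwa [hk, Subgroup.mem_bot] at hx
      rw [hgc0]
      ext x
      simp only [Set.mem_univ, Set.mem_singleton_iff, true_iff]
      rw [htriv x, e1]
    | succ m =>
      ext x
      simp only [Set.mem_singleton_iff]
      constructor
      · intro hx
        have h1 := (KP (m + 1) x hx).1
        rw [hk, Subgroup.mem_bot] at h1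
        rw [h1, e1]
      · intro hx
        rw [hx]
        exact (hsub m).1
  · intro a ha b
    cases k with
    | zero =>
      have htriv : ∀ x : A, x = 1 := by
        intro x
        have hx : x ∈ Ls 0 := by rw [hL0]; exact Subgroup.mem_top _
        rwa [hk, Subgroup.mem_bot] at hx
      refine ⟨?_, ?_, ?_⟩ <;> rw [htriv a, htriv b] <;> simp [B.one_circ]
    | succ m =>
      have ha' : a ∈ gc m := ha
      obtain ⟨ha1, ha2⟩ := KP m a ha'
      refine ⟨?_, ?_, ?_⟩
      · have h := st_mem hLs' ha1 b
        rw [hk, Subgroup.mem_bot] at h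
        rw [B.circ_eq_st b a, h, mul_one]
      · have h := ha2 0 b (by rw [hL0]; exact Subgroup.mem_top _)
        have hidx : m + 0 + 1 = m + 1 := by omega
        rw [hidx, hk, Subgroup.mem_bot] at h
        rw [B.circ_eq_st a b, h, mul_one]
      · have h := commG_mem hLs' ha1 b
        rw [hk, Subgroup.mem_bot] at h
        have h2 : a * b = (b * a * b⁻¹ * a⁻¹)⁻¹ * (b * a) := by group
        rw [h2, h]
        group
end
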